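/- arXiv:2305.01927 — 5 statements merged into one kernel-verified Lean document; each statement's English description precedes it below -/
import Mathlib

section
/- Let G be a finite threshold graph whose chromatic number χ(G) is divisible by 3 and which is not ω-unique (i.e., G contains at least two cliques of order ω(G)). Then the robust chromatic number of G equals χ(G)/3 + 1. -/
open SimpleGraph

/-- A 1-selection on `G`: each vertex `v` selects (at most) one pair containing `v`;
deleting the selected pairs from the edge set removes at most one edge incident
to each vertex.  (Selecting a non-edge, e.g. the diagonal, deletes nothing at `v`.) -/
def IsOneSelection {V : Type*} (G : SimpleGraph V) (f : V → Sym2 V) : Prop :=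
  ∀ v : V, v ∈ f v

/-- The 1-removed graph `G_f`. -/
def oneRemoved {V : Type*} (G : SimpleGraph V) (f : V → Sym2 V) : SimpleGraph V :=
  G.deleteEdges (Set.range f)

/-- The chromatic number of `G` as a natural number. -/
noncomputable def chromNum {V : Type*} (G : SimpleGraph V) : ℕ :=
  sInf {n : ℕ | G.Colorable n}

/-- The robust chromatic number `χ₁(G)`: the minimum of `χ(G_f)` over all 1-selections. -/
noncomputable def robustChromNum {V : Type*} (G : SimpleGraph V) : ℕ :=
  sInf {m : ℕ | ∃ f : V → Sym2 V, IsOneSelection G f ∧ chromNum (oneRemoved G f) = m}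

/-- The robust clique number `ω₁(G)`: the minimum of `ω(G_f)` over all 1-selections. -/
noncomputable def robustCliqueNum {V : Type*} (G : SimpleGraph V) : ℕ :=
  sInf {m : ℕ | ∃ f : V → Sym2 V, IsOneSelection G f ∧ (oneRemoved G f).cliqueNum = m}

/-- A set of vertices is independent if no two of its elements are adjacent. -/
def IsIndepVxSet {V : Type*} (G : SimpleGraph V) (s : Set V) : Prop :=
  s.Pairwise fun a b => ¬ G.Adj a b

/-- The independence number of `G`. -/
noncomputable def indepNum {V : Type*} (G : SimpleGraph V) : ℕ :=
  sSup {n : ℕ | ∃ s : Finset V, IsIndepVxSet G ↑s ∧ s.card = n}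

/-- The robust independence number `α₁(G)`: the maximum of `α(G_f)` over all 1-selections. -/
noncomputable def robustIndepNum {V : Type*} (G : SimpleGraph V) : ℕ :=
  sSup {m : ℕ | ∃ f : V → Sym2 V, IsOneSelection G f ∧ _root_.indepNum (oneRemoved G f) = m}

/-- `U` is robust independent in `G` if some 1-selection makes it independent. -/
def IsRobustIndep {V : Type*} (G : SimpleGraph V) (U : Set V) : Prop :=
  ∃ f : V → Sym2 V, IsOneSelection G f ∧ IsIndepVxSet (oneRemoved G f) U

/-- Threshold graph. -/
def IsThresholdGraph {V : Type*} (G : SimpleGraph V) : Prop :=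
  ∃ (h : ℝ) (g : V → ℝ), ∀ x y : V, x ≠ y → (G.Adj x y ↔ g x + g y > h)

/-- `G` is ω-unique: it has exactly one clique of order `ω(G)`. -/
def IsOmegaUnique {V : Type*} (G : SimpleGraph V) : Prop :=
  ∃! s : Finset V, G.IsNClique G.cliqueNum s

/-- Split graph: vertex set partitions into a clique and an independent set. -/
def IsSplitGraph {V : Type*} (G : SimpleGraph V) : Prop :=
  ∃ A : Set V, G.IsClique A ∧ IsIndepVxSet G Aᶜ

/-- Chordal graph: no induced cycle of length greater than 3. -/
def IsChordalGraph {V : Type*} (G : SimpleGraph V) : Prop :=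
  ∀ n : ℕ, 4 ≤ n → ¬ ∃ φ : Fin n ↪ V,
    ∀ i j : Fin n, G.Adj (φ i) (φ j) ↔ (SimpleGraph.cycleGraph n).Adj i j

/-- Interval graph: vertices can be assigned nonempty closed real intervals so that
two distinct vertices are adjacent iff their intervals intersect. -/
def IsIntervalGraph {V : Type*} (G : SimpleGraph V) : Prop :=
  ∃ a b : V → ℝ, (∀ v, a v ≤ b v) ∧
    ∀ u v : V, u ≠ v →
      (G.Adj u v ↔ (Set.Icc (a u) (b u) ∩ Set.Icc (a v) (b v)).Nonempty)

/-- Unit interval graph: vertices can be labelled by reals so that two distinct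
vertices are adjacent iff their labels are at distance less than 1. -/
def IsUnitIntervalGraph {V : Type*} (G : SimpleGraph V) : Prop :=
  ∃ r : V → ℝ, ∀ u v : V, u ≠ v → (G.Adj u v ↔ |r u - r v| < 1)

/-- Quasi-unicyclic: every connected component contains at most one cycle,
i.e. any two cycles lying in the same component have the same edge set. -/
def QuasiUnicyclic {V : Type*} [DecidableEq V] (G : SimpleGraph V) : Prop :=
  ∀ (u v : V) (p : G.Walk u u) (q : G.Walk v v),
    p.IsCycle → q.IsCycle → G.Reachable u v →
      p.edges.toFinset = q.edges.toFinset

/-- The Kneser graph `KG(n,k)`. -/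
def kneserGraph (n k : ℕ) : SimpleGraph {s : Finset (Fin n) // s.card = k} where
  Adj a b := a ≠ b ∧ Disjoint a.1 b.1
  symm := by
    constructor
    intro a b hab
    exact ⟨hab.1.symm, hab.2.symm⟩
  loopless := by
    constructor
    intro a ha
    exact ha.1 rfl

section Aux

variable {V : Type} [Fintype V] [DecidableEq V] {G : SimpleGraph V}

lemma thr_cross (hthr : IsThresholdGraph G) {a b x y : V}
    (hab : G.Adj a b) (hxy : G.Adj x y) (hax : a ≠ x) (hby : b ≠ y)
    (h1 : ¬ G.Adj a x) (h2 : ¬ G.Adj b y) : False := by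
  obtain ⟨h, g, hg⟩ := hthr
  have e1 := (hg a b hab.ne).mp hab
  have e2 := (hg x y hxy.ne).mp hxy
  have e3 : ¬ g a + g x > h := fun hh => h1 ((hg a x hax).mpr hh)
  have e4 : ¬ g b + g y > h := fun hh => h2 ((hg b y hby).mpr hh)
  push_neg at e3 e4
  linarith

lemma cliqueSet_bdd : BddAbove {n | ∃ s, G.IsNClique n s} := by
  refine ⟨Fintype.card V, ?_⟩
  rintro n ⟨s, hs⟩
  rw [← hs.2]
  simpa using Finset.card_le_univ s

lemma clique_card_le {s : Finset V} (hs : G.IsClique ↑s) : s.card ≤ G.cliqueNum :=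
  le_csSup cliqueSet_bdd ⟨s, hs, rfl⟩

lemma exists_nonneighbor {K : Finset V} (hK : G.IsNClique G.cliqueNum K) {w : V}
    (hw : w ∉ K) : ∃ x ∈ K, ¬ G.Adj w x := by
  by_contra hno
  push_neg at hno
  have hcl : G.IsClique ↑(insert w K) := by
    rw [Finset.coe_insert]
    apply hK.1.insert
    intro b hb hbw
    exact hno b hb
  have := clique_card_le hcl
  rw [Finset.card_insert_of_notMem hw, hK.2] at this
  omega

lemma maxclique_compl_indep (hthr : IsThresholdGraph G) {K : Finset V}
    (hK : G.IsNClique G.cliqueNum K) {u v : V}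
    (hu : u ∉ K) (hv : v ∉ K) (huv : u ≠ v) : ¬ G.Adj u v := by
  intro hadj
  obtain ⟨x, hxK, hux⟩ := exists_nonneighbor hK hu
  obtain ⟨y, hyK, hvy⟩ := exists_nonneighbor hK hv
  -- case distinction on whether we can pick distinct nonneighbors
  by_cases hsep : ∃ x' ∈ K, ∃ y' ∈ K, x' ≠ y' ∧ ¬ G.Adj u x' ∧ ¬ G.Adj v y'
  · obtain ⟨x', hx', y', hy', hxy', h1, h2⟩ := hsep
    exact thr_cross hthr hadj (hK.1 hx' hy' hxy')
      (fun h => hu (h ▸ hx')) (fun h => hv (h ▸ hy')) h1 h2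
  · push_neg at hsep
    -- then every nonneighbor of u in K equals every nonneighbor of v in K
    have hxy : x = y := by
      by_contra hne
      exact hvy (hsep x hxK y hyK hne hux)
    subst hxy
    have hadjall : ∀ z ∈ K, z ≠ x → G.Adj u z ∧ G.Adj v z := by
      intro z hz hzx
      constructor
      · by_contra hzu
        exact hvy (hsep z hz x hxK hzx hzu)
      · by_contra hzv
        exact hzv (hsep x hxK z hz (Ne.symm hzx) hux)
    have hcl : G.IsClique ↑(insert u (insert v (K.erase x))) := by
      intro a ha b hb hab
      simp only [Finset.coe_insert, Set.mem_insert_iff, Finset.mem_coe,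
        Finset.mem_erase] at ha hb
      rcases ha with rfl | rfl | ⟨hax, haK⟩ <;> rcases hb with rfl | rfl | hb
      · exact absurd rfl hab
      · exact hadj
      · exact (hadjall b hb.2 hb.1).1
      · exact hadj.symm
      · exact absurd rfl hab
      · exact (hadjall b hb.2 hb.1).2
      · exact ((hadjall a haK hax).1).symm
      · exact ((hadjall a haK hax).2).symm
      · exact hK.1 haK hb.2 hab
    have hcard := clique_card_le hcl
    have hxK' : x ∈ K := hxK
    have h1 : v ∉ K.erase x := fun h => hv (Finset.mem_of_mem_erase h)
    have h2 : u ∉ insert v (K.erase x) := by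
      simp only [Finset.mem_insert]
      rintro (rfl | h)
      · exact huv rfl
      · exact hu (Finset.mem_of_mem_erase h)
    rw [Finset.card_insert_of_notMem h2, Finset.card_insert_of_notMem h1,
      Finset.card_erase_of_mem hxK', hK.2] at hcard
    have hpos : 0 < G.cliqueNum := by
      have : ({x} : Finset V).card ≤ G.cliqueNum := by
        apply clique_card_le
        simp [Set.Pairwise]
      simpa [Nat.one_le_iff_ne_zero, Nat.pos_iff_ne_zero] using this
    omega

lemma chromNum_eq_cliqueNum (hthr : IsThresholdGraph G) : chromNum G = G.cliqueNum := by
  classical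
  obtain ⟨K, hK⟩ := G.exists_isNClique_cliqueNum
  apply le_antisymm
  · apply Nat.sInf_le
    show G.Colorable G.cliqueNum
    cases isEmpty_or_nonempty V with
    | inl hemp => exact Colorable.of_isEmpty (G := G) _
    | inr hne =>
      have hwit : ∀ v : V, v ∉ K → ∃ x ∈ K, ¬ G.Adj v x := fun v hv =>
        exists_nonneighbor hK hv
      let color : V → ↥K := fun v =>
        if hv : v ∈ K then ⟨v, hv⟩
        else ⟨(hwit v hv).choose, (hwit v hv).choose_spec.1⟩
      have hvalid : ∀ {u v : V}, G.Adj u v → color u ≠ color v := by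
        intro u v hadj heq
        by_cases hu : u ∈ K <;> by_cases hv : v ∈ K
        · simp only [color, dif_pos hu, dif_pos hv, Subtype.mk.injEq] at heq
          exact hadj.ne heq
        · simp only [color, dif_pos hu, dif_neg hv, Subtype.mk.injEq] at heq
          exact (hwit v hv).choose_spec.2 (heq ▸ hadj.symm)
        · simp only [color, dif_neg hu, dif_pos hv, Subtype.mk.injEq] at heq
          exact (hwit u hu).choose_spec.2 (heq ▸ hadj)
        · exact maxclique_compl_indep hthr hK hu hv hadj.ne hadj
      have hcol : G.Coloring ↥K := ⟨color, hvalid⟩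
      have := hcol.colorable
      rwa [Fintype.card_coe, hK.2] at this
  · have hmem : Fintype.card V ∈ {n : ℕ | G.Colorable n} := G.colorable_of_fintype
    apply le_csInf ⟨_, hmem⟩
    intro n hn
    replace hn : G.Colorable n := hn
    rw [← hK.2]
    exact hK.1.card_le_of_colorable hn

lemma lower_bound (hthr : IsThresholdGraph G) {k : ℕ} {K K' : Finset V}
    (hK : G.IsNClique (3*k) K) (hK' : G.IsNClique (3*k) K') (hne : K ≠ K')
    {f : V → Sym2 V} (hf : IsOneSelection G f) :
    ¬ (oneRemoved G f).Colorable k := by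
  classical
  rintro ⟨c⟩
  have key : ∀ {u v : V}, G.Adj u v → c u = c v → s(u,v) ∈ Set.range f := by
    intro u v hadj hc
    by_contra hmem
    exact c.valid (by simp only [oneRemoved, SimpleGraph.deleteEdges_adj]
                      exact ⟨hadj, hmem⟩) hc
  have hle3 : ∀ (L : Finset V), G.IsClique ↑L → ∀ i : Fin k,
      (L.filter fun v => c v = i).card ≤ 3 := by
    intro L hL i
    by_contra hgt
    push_neg at hgt
    obtain ⟨S, hSsub, hS4⟩ := Finset.exists_subset_card_eq (s := L.filter fun v => c v = i) (n := 4) (by omega)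
    have hScol : ∀ v ∈ S, c v = i := fun v hv => (Finset.mem_filter.mp (hSsub hv)).2
    have hSL : ∀ v ∈ S, v ∈ L := fun v hv => (Finset.mem_filter.mp (hSsub hv)).1
    have hrange : ∀ p ∈ S, ∀ q ∈ S, p ≠ q → s(p,q) ∈ Set.range f := by
      intro p hp q hq hpq
      exact key (hL (hSL p hp) (hSL q hq) hpq) (by rw [hScol p hp, hScol q hq])
    obtain ⟨a, ha⟩ := Finset.card_pos.mp (by omega : 0 < S.card)
    have h3 : (S.erase a).card = 3 := by rw [Finset.card_erase_of_mem ha, hS4]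
    obtain ⟨x, y, z, hxy, hxz, hyz, hSe⟩ := Finset.card_eq_three.mp h3
    have hx : x ∈ S.erase a := by rw [hSe]; simp
    have hy : y ∈ S.erase a := by rw [hSe]; simp
    have hz : z ∈ S.erase a := by rw [hSe]; simp
    obtain ⟨hxa, hxS⟩ := Finset.mem_erase.mp hx
    obtain ⟨hya, hyS⟩ := Finset.mem_erase.mp hy
    obtain ⟨hza, hzS⟩ := Finset.mem_erase.mp hz
    set E : Finset (Sym2 V) := {s(a,x), s(a,y), s(a,z), s(x,y), s(x,z), s(y,z)} with hE
    have hEcard : E.card = 6 := by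
      rw [hE]
      rw [Finset.card_insert_of_notMem (by simp [Sym2.eq_iff]; tauto),
          Finset.card_insert_of_notMem (by simp [Sym2.eq_iff]; tauto),
          Finset.card_insert_of_notMem (by simp [Sym2.eq_iff]; tauto),
          Finset.card_insert_of_notMem (by simp [Sym2.eq_iff]; tauto),
          Finset.card_insert_of_notMem (by simp [Sym2.eq_iff]; tauto),
          Finset.card_singleton]
    have hsub : E ⊆ S.image f := by
      intro e he
      have hex : ∃ p ∈ S, ∃ q ∈ S, p ≠ q ∧ e = s(p,q) := by
        rw [hE] at he
        simp only [Finset.mem_insert, Finset.mem_singleton] at he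
        rcases he with rfl|rfl|rfl|rfl|rfl|rfl
        exacts [⟨a, ha, x, hxS, Ne.symm hxa, rfl⟩, ⟨a, ha, y, hyS, Ne.symm hya, rfl⟩,
          ⟨a, ha, z, hzS, Ne.symm hza, rfl⟩, ⟨x, hxS, y, hyS, hxy, rfl⟩,
          ⟨x, hxS, z, hzS, hxz, rfl⟩, ⟨y, hyS, z, hzS, hyz, rfl⟩]
      obtain ⟨p, hp, q, hq, hpq, rfl⟩ := hex
      obtain ⟨w, hw⟩ := hrange p hp q hq hpq
      have hwmem : w ∈ s(p,q) := hw ▸ hf w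
      rw [Sym2.mem_iff] at hwmem
      apply Finset.mem_image.mpr
      rcases hwmem with rfl | rfl
      · exact ⟨w, hp, hw⟩
      · exact ⟨w, hq, hw⟩
    have hfin := (Finset.card_le_card hsub).trans Finset.card_image_le
    rw [hEcard, hS4] at hfin
    omega
  have fib3 : ∀ (L : Finset V), G.IsNClique (3*k) L → ∀ i : Fin k,
      (L.filter fun v => c v = i).card = 3 := by
    intro L hL i
    have hsum : ∑ j : Fin k, (L.filter fun v => c v = j).card = 3*k := by
      rw [← Finset.card_eq_sum_card_fiberwise (fun v _ => Finset.mem_univ (c v)), hL.2]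
    by_contra hne3
    have hlt : (L.filter fun v => c v = i).card < 3 := lt_of_le_of_ne (hle3 L hL.1 i) hne3
    have hslt : ∑ j : Fin k, (L.filter fun v => c v = j).card < ∑ _j : Fin k, 3 :=
      Finset.sum_lt_sum (fun j _ => hle3 L hL.1 j) ⟨i, Finset.mem_univ i, hlt⟩
    rw [hsum, Finset.sum_const, Finset.card_univ, Fintype.card_fin, smul_eq_mul] at hslt
    omega
  have struct : ∀ (L : Finset V), G.IsNClique (3*k) L → ∀ i : Fin k,
      (∀ v ∈ L.filter fun v => c v = i,
        ∃ w ∈ L.filter fun v => c v = i, w ≠ v ∧ f v = s(v, w))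
      ∧ Set.InjOn f ↑(L.filter fun v => c v = i) := by
    intro L hL i
    obtain ⟨x, y, z, hxy, hxz, hyz, hTe⟩ := Finset.card_eq_three.mp (fib3 L hL i)
    have hxT : x ∈ L.filter fun v => c v = i := by rw [hTe]; simp
    have hyT : y ∈ L.filter fun v => c v = i := by rw [hTe]; simp
    have hzT : z ∈ L.filter fun v => c v = i := by rw [hTe]; simp
    have hrange : ∀ p ∈ L.filter (fun v => c v = i), ∀ q ∈ L.filter (fun v => c v = i), p ≠ q → s(p,q) ∈ Set.range f := by
      intro p hp q hq hpq
      exact key (hL.1 (Finset.mem_filter.mp hp).1 (Finset.mem_filter.mp hq).1 hpq)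
        (by rw [(Finset.mem_filter.mp hp).2, (Finset.mem_filter.mp hq).2])
    set E : Finset (Sym2 V) := {s(x,y), s(x,z), s(y,z)} with hE
    have hEcard : E.card = 3 := by
      rw [hE]
      rw [Finset.card_insert_of_notMem (by simp [Sym2.eq_iff]; tauto),
          Finset.card_insert_of_notMem (by simp [Sym2.eq_iff]; tauto),
          Finset.card_singleton]
    have hsub : E ⊆ (L.filter fun v => c v = i).image f := by
      intro e he
      have hex : ∃ p ∈ L.filter (fun v => c v = i), ∃ q ∈ L.filter (fun v => c v = i), p ≠ q ∧ e = s(p,q) := by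
        rw [hE] at he
        simp only [Finset.mem_insert, Finset.mem_singleton] at he
        rcases he with rfl|rfl|rfl
        exacts [⟨x, hxT, y, hyT, hxy, rfl⟩, ⟨x, hxT, z, hzT, hxz, rfl⟩,
          ⟨y, hyT, z, hzT, hyz, rfl⟩]
      obtain ⟨p, hp, q, hq, hpq, rfl⟩ := hex
      obtain ⟨w, hw⟩ := hrange p hp q hq hpq
      have hwmem : w ∈ s(p,q) := hw ▸ hf w
      rw [Sym2.mem_iff] at hwmem
      apply Finset.mem_image.mpr
      rcases hwmem with rfl | rfl
      · exact ⟨w, hp, hw⟩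
      · exact ⟨w, hq, hw⟩
    have himgle : ((L.filter fun v => c v = i).image f).card ≤ 3 :=
      Finset.card_image_le.trans (by rw [fib3 L hL i])
    have heq : E = (L.filter fun v => c v = i).image f :=
      Finset.eq_of_subset_of_card_le hsub (by rw [hEcard]; exact himgle)
    constructor
    · intro v hv
      have hfv : f v ∈ E := by rw [heq]; exact Finset.mem_image_of_mem f hv
      rw [hE] at hfv
      simp only [Finset.mem_insert, Finset.mem_singleton] at hfv
      rcases hfv with h | h | h
      · rcases Sym2.mem_iff.mp (h ▸ hf v) with rfl | rfl
        · exact ⟨y, hyT, hxy.symm, h⟩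
        · exact ⟨x, hxT, hxy, h.trans Sym2.eq_swap⟩
      · rcases Sym2.mem_iff.mp (h ▸ hf v) with rfl | rfl
        · exact ⟨z, hzT, hxz.symm, h⟩
        · exact ⟨x, hxT, hxz, h.trans Sym2.eq_swap⟩
      · rcases Sym2.mem_iff.mp (h ▸ hf v) with rfl | rfl
        · exact ⟨z, hzT, hyz.symm, h⟩
        · exact ⟨y, hyT, hyz, h.trans Sym2.eq_swap⟩
    · apply Finset.card_image_iff.mp
      rw [← heq, hEcard, fib3 L hL i]
  -- a common element of the two fibers forces them to coincide
  have common : ∀ i : Fin k, ∀ v, v ∈ K.filter (fun v => c v = i) →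
      v ∈ K'.filter (fun v => c v = i) →
      K.filter (fun v => c v = i) = K'.filter (fun v => c v = i) := by
    intro i v hvT hvT'
    obtain ⟨w, hwT, hwv, hfv⟩ := (struct K hK i).1 v hvT
    obtain ⟨w', hw'T', hw'v, hfv'⟩ := (struct K' hK' i).1 v hvT'
    have hww' : w = w' := by
      have h := hfv.symm.trans hfv'
      rw [Sym2.eq_iff] at h
      rcases h with ⟨_, h⟩ | ⟨h1, h2⟩
      · exact h
      · exact absurd h1.symm hw'v
    subst hww'
    obtain ⟨u, huT, huw, hfw⟩ := (struct K hK i).1 w hwT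
    obtain ⟨u', hu'T', hu'w, hfw'⟩ := (struct K' hK' i).1 w hw'T'
    have huu' : u = u' := by
      have h := hfw.symm.trans hfw'
      rw [Sym2.eq_iff] at h
      rcases h with ⟨_, h⟩ | ⟨h1, h2⟩
      · exact h
      · exact absurd h1.symm hu'w
    subst huu'
    have huv : u ≠ v := by
      rintro rfl
      have hinj := (struct K hK i).2
      have heqf : f w = f u := by rw [hfw, hfv]; exact Sym2.eq_swap
      exact hwv (hinj (Finset.mem_coe.mpr hwT) (Finset.mem_coe.mpr hvT) heqf)
    have hvw : v ≠ w := Ne.symm hwv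
    have hwu : w ≠ u := Ne.symm huw
    have hvu : v ≠ u := Ne.symm huv
    have hc3 : ({v, w, u} : Finset V).card = 3 := by
      rw [Finset.card_insert_of_notMem (by simp [hvw, hvu]),
          Finset.card_insert_of_notMem (by simp [hwu]), Finset.card_singleton]
    have hsub1 : ({v, w, u} : Finset V) ⊆ K.filter (fun v => c v = i) := by
      intro p hp
      simp only [Finset.mem_insert, Finset.mem_singleton] at hp
      rcases hp with rfl|rfl|rfl
      exacts [hvT, hwT, huT]
    have hsub2 : ({v, w, u} : Finset V) ⊆ K'.filter (fun v => c v = i) := by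
      intro p hp
      simp only [Finset.mem_insert, Finset.mem_singleton] at hp
      rcases hp with rfl|rfl|rfl
      exacts [hvT', hw'T', hu'T']
    have h1 := Finset.eq_of_subset_of_card_le hsub1 (by rw [fib3 K hK i, hc3])
    have h2 := Finset.eq_of_subset_of_card_le hsub2 (by rw [fib3 K' hK' i, hc3])
    rw [← h1, ← h2]
  -- some fiber differs
  have hexi : ∃ i : Fin k, K.filter (fun v => c v = i) ≠ K'.filter (fun v => c v = i) := by
    by_contra hall
    push_neg at hall
    apply hne
    ext v
    constructor
    · intro hv
      have hm : v ∈ K.filter (fun w => c w = c v) := Finset.mem_filter.mpr ⟨hv, rfl⟩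
      rw [hall (c v)] at hm
      exact (Finset.mem_filter.mp hm).1
    · intro hv
      have hm : v ∈ K'.filter (fun w => c w = c v) := Finset.mem_filter.mpr ⟨hv, rfl⟩
      rw [← hall (c v)] at hm
      exact (Finset.mem_filter.mp hm).1
  obtain ⟨i, hi⟩ := hexi
  have hdisj : ∀ v, v ∈ K.filter (fun v => c v = i) → v ∉ K'.filter (fun v => c v = i) :=
    fun v hv hv' => hi (common i v hv hv')
  have hcrossnon : ∀ p ∈ K.filter (fun v => c v = i), ∀ q ∈ K'.filter (fun v => c v = i),
      ¬ G.Adj p q := by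
    intro p hp q hq hadj
    have hpq : c p = c q :=
      ((Finset.mem_filter.mp hp).2).trans ((Finset.mem_filter.mp hq).2).symm
    obtain ⟨w, hw⟩ := key hadj hpq
    have hwm : w ∈ s(p,q) := hw ▸ hf w
    rw [Sym2.mem_iff] at hwm
    rcases hwm with rfl | rfl
    · obtain ⟨w2, hw2T, hw2w, hfw⟩ := (struct K hK i).1 w hp
      have hw2q : w2 = q := by
        have h := hfw.symm.trans hw
        rw [Sym2.eq_iff] at h
        rcases h with ⟨_, h⟩ | ⟨h1, h2⟩
        · exact h
        · exact absurd h2 hw2w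
      exact hdisj q (hw2q ▸ hw2T) hq
    · obtain ⟨w2, hw2T, hw2w, hfw⟩ := (struct K' hK' i).1 w hq
      have hw2p : w2 = p := by
        have h := hfw.symm.trans (hw.trans Sym2.eq_swap)
        rw [Sym2.eq_iff] at h
        rcases h with ⟨_, h⟩ | ⟨h1, h2⟩
        · exact h
        · exact absurd h2 hw2w
      exact hdisj p hp (hw2p ▸ hw2T)
  obtain ⟨x, y, z, hxy, hxz, hyz, hTe⟩ := Finset.card_eq_three.mp (fib3 K hK i)
  obtain ⟨x', y', z', hxy', hxz', hyz', hTe'⟩ := Finset.card_eq_three.mp (fib3 K' hK' i)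
  have hxT : x ∈ K.filter (fun v => c v = i) := by rw [hTe]; simp
  have hyT : y ∈ K.filter (fun v => c v = i) := by rw [hTe]; simp
  have hx'T : x' ∈ K'.filter (fun v => c v = i) := by rw [hTe']; simp
  have hy'T : y' ∈ K'.filter (fun v => c v = i) := by rw [hTe']; simp
  have hadjxy : G.Adj x y :=
    hK.1 (Finset.mem_filter.mp hxT).1 (Finset.mem_filter.mp hyT).1 hxy
  have hadjxy' : G.Adj x' y' :=
    hK'.1 (Finset.mem_filter.mp hx'T).1 (Finset.mem_filter.mp hy'T).1 hxy'
  exact thr_cross hthr hadjxy hadjxy'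
    (fun h => hdisj x hxT (h ▸ hx'T)) (fun h => hdisj y hyT (h ▸ hy'T))
    (hcrossnon x hxT x' hx'T) (hcrossnon y hyT y' hy'T)

lemma upper_bound (hthr : IsThresholdGraph G) {k : ℕ} (hk : G.cliqueNum = 3*k) :
    ∃ f : V → Sym2 V, IsOneSelection G f ∧ (oneRemoved G f).Colorable (k+1) := by
  classical
  obtain ⟨K, hK⟩ := G.exists_isNClique_cliqueNum
  have hcard : Fintype.card ↥K = 3*k := by rw [Fintype.card_coe, hK.2, hk]
  let e : ↥K ≃ Fin (3*k) := Fintype.equivFinOfCardEq hcard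
  let nxt : ↥K → ↥K := fun v =>
    e.symm ⟨3*((e v : ℕ)/3) + (((e v : ℕ)+1) % 3), by have := (e v).isLt; omega⟩
  let f : V → Sym2 V := fun v => if hv : v ∈ K then s(v, (nxt ⟨v, hv⟩ : V)) else s(v, v)
  have hnxtkey : ∀ (u : ↥K), (e (nxt u) : ℕ) = 3*((e u : ℕ)/3) + (((e u : ℕ)+1) % 3) := by
    intro u
    simp only [nxt, Equiv.apply_symm_apply]
  refine ⟨f, fun v => ?_, ?_⟩
  · by_cases hv : v ∈ K <;> simp [f, hv]
  · have hknd : ∀ (u : ↥K), ((e u : ℕ)/3) < k + 1 := by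
      intro u; have := (e u).isLt; omega
    let col : V → Fin (k+1) := fun v =>
      if hv : v ∈ K then ⟨(e ⟨v,hv⟩ : ℕ)/3, hknd _⟩ else ⟨k, by omega⟩
    refine ⟨SimpleGraph.Coloring.mk col ?_⟩
    intro u v hadj
    rw [oneRemoved, SimpleGraph.deleteEdges_adj] at hadj
    obtain ⟨hGadj, hnotdel⟩ := hadj
    intro hcol
    by_cases hu : u ∈ K <;> by_cases hv : v ∈ K
    · simp only [col, dif_pos hu, dif_pos hv, Fin.mk.injEq] at hcol
      have hne' : (e ⟨u,hu⟩ : ℕ) ≠ (e ⟨v,hv⟩ : ℕ) := by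
        intro h
        exact hGadj.ne (congrArg Subtype.val (e.injective (Fin.ext h)))
      have hcase : ((e ⟨v,hv⟩ : ℕ) = 3*((e ⟨u,hu⟩:ℕ)/3) + (((e ⟨u,hu⟩:ℕ)+1)%3))
          ∨ ((e ⟨u,hu⟩ : ℕ) = 3*((e ⟨v,hv⟩:ℕ)/3) + (((e ⟨v,hv⟩:ℕ)+1)%3)) := by omega
      apply hnotdel
      rcases hcase with h | h
      · refine ⟨u, ?_⟩
        have hnv : (nxt ⟨u,hu⟩ : V) = v := by
          have h2 : e (nxt ⟨u,hu⟩) = e ⟨v,hv⟩ := Fin.ext (by rw [hnxtkey, h])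
          exact congrArg Subtype.val (e.injective h2)
        simp only [f, dif_pos hu]
        rw [hnv]
      · refine ⟨v, ?_⟩
        have hnv : (nxt ⟨v,hv⟩ : V) = u := by
          have h2 : e (nxt ⟨v,hv⟩) = e ⟨u,hu⟩ := Fin.ext (by rw [hnxtkey, h])
          exact congrArg Subtype.val (e.injective h2)
        simp only [f, dif_pos hv]
        rw [hnv]
        exact Sym2.eq_swap
    · simp only [col, dif_pos hu, dif_neg hv, Fin.mk.injEq] at hcol
      have := (e ⟨u,hu⟩).isLt
      omega
    · simp only [col, dif_neg hu, dif_pos hv, Fin.mk.injEq] at hcol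
      have := (e ⟨v,hv⟩).isLt
      omega
    · exact maxclique_compl_indep hthr hK hu hv hGadj.ne hGadj

theorem robustChromNum_of_threshold_not_omegaUnique'
    (hthr : IsThresholdGraph G) (hdiv : 3 ∣ chromNum G) (hnu : ¬ IsOmegaUnique G) :
    robustChromNum G = chromNum G / 3 + 1 := by
  classical
  obtain ⟨K, hK⟩ := G.exists_isNClique_cliqueNum
  have hchi : chromNum G = G.cliqueNum := chromNum_eq_cliqueNum hthr
  rw [hchi] at hdiv
  have homega_pos : G.cliqueNum ≠ 0 := by
    intro h0
    apply hnu
    refine ⟨∅, ?_, ?_⟩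
    · rw [h0]
      exact ⟨by simp, by simp⟩
    · intro t ht
      rw [h0] at ht
      exact Finset.card_eq_zero.mp ht.2
  set k := G.cliqueNum / 3 with hkdef
  have h3k : G.cliqueNum = 3*k := by omega
  have hK3 : G.IsNClique (3*k) K := h3k ▸ hK
  obtain ⟨K', hK'c, hKne⟩ : ∃ K', G.IsNClique (3*k) K' ∧ K' ≠ K := by
    by_contra hno
    push_neg at hno
    exact hnu ⟨K, hK, fun t ht => hno t (h3k ▸ ht)⟩
  obtain ⟨f0, hf0, hcol0⟩ := upper_bound hthr h3k
  have hlow : ∀ (f : V → Sym2 V), IsOneSelection G f →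
      k + 1 ≤ chromNum (oneRemoved G f) := by
    intro f hf
    have hnc := lower_bound hthr hK3 hK'c (Ne.symm hKne) hf
    have hmem : Fintype.card V ∈ {n : ℕ | (oneRemoved G f).Colorable n} :=
      (oneRemoved G f).colorable_of_fintype
    apply le_csInf ⟨_, hmem⟩
    intro n hn
    replace hn : (oneRemoved G f).Colorable n := hn
    by_contra hlt
    push_neg at hlt
    exact hnc (hn.mono (by omega))
  have hup : chromNum (oneRemoved G f0) = k + 1 := by
    apply le_antisymm
    · have hmem : k + 1 ∈ {n : ℕ | (oneRemoved G f0).Colorable n} := hcol0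
      exact Nat.sInf_le hmem
    · exact hlow f0 hf0
  have hmemR : k + 1 ∈ {m | ∃ f, IsOneSelection G f ∧ chromNum (oneRemoved G f) = m} :=
    ⟨f0, hf0, hup⟩
  have hfin : robustChromNum G = k + 1 := by
    apply le_antisymm
    · exact Nat.sInf_le hmemR
    · apply le_csInf ⟨_, hmemR⟩
      rintro m ⟨f, hf, rfl⟩
      exact hlow f hf
  rw [hfin, hchi]

end Aux

/-- For a finite threshold graph `G` with `3 ∣ χ(G)` which is not ω-unique,
`χ₁(G) = χ(G)/3 + 1`. -/
theorem robustChromNum_of_threshold_not_omegaUnique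
    {V : Type} [Fintype V] [DecidableEq V] (G : SimpleGraph V)
    (hthr : IsThresholdGraph G) (hdiv : 3 ∣ chromNum G) (hnu : ¬ IsOmegaUnique G) :
    robustChromNum G = chromNum G / 3 + 1 :=
  robustChromNum_of_threshold_not_omegaUnique' hthr hdiv hnu
end

section
/- Every finite split graph G satisfies χ₁(G) ≤ ⌈(χ(G) − 1)/3⌉ + 1. -/
open SimpleGraph

/-- Successor function cycling within blocks of 3 (truncated at `n`). -/
private def sigma3 (n j : ℕ) : ℕ :=
  if (j + 1) % 3 = 0 ∨ j + 1 = n then 3 * (j / 3) else j + 1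

private lemma sigma3_lt {n j : ℕ} (h : j < n) : sigma3 n j < n := by
  unfold sigma3; split <;> omega

/-- The 1-selection used for split graphs. -/
private noncomputable def selFun {V : Type} [DecidableEq V] (F : Finset V) :
    V → Sym2 V := fun v =>
  if hv : v ∈ F then
    s(v, (F.equivFin.symm ⟨sigma3 F.card (F.equivFin ⟨v, hv⟩),
      sigma3_lt (F.equivFin ⟨v, hv⟩).2⟩ : V))
  else if h1 : F.card % 3 = 1 then
    s(v, (F.equivFin.symm ⟨F.card - 1, by omega⟩ : V))
  else s(v, v)

/-- The coloring used for split graphs. -/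
private noncomputable def colFun {V : Type} [DecidableEq V] (F : Finset V) : V → ℕ :=
  fun v => if hv : v ∈ F then (F.equivFin ⟨v, hv⟩ : ℕ) / 3 else (F.card + 1) / 3

private lemma exists_good_selection {V : Type} [Fintype V] [DecidableEq V]
    (G : SimpleGraph V) (F : Finset V) (hclique : G.IsClique ↑F)
    (hindep : ∀ u v : V, u ∉ F → v ∉ F → ¬ G.Adj u v) :
    ∃ f : V → Sym2 V, IsOneSelection G f ∧
      (oneRemoved G f).Colorable ((F.card + 1) / 3 + 1) := by
  classical
  have hbnd : ∀ v, colFun F v < (F.card + 1) / 3 + 1 := by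
    intro v
    unfold colFun
    split
    · rename_i hv
      have := (F.equivFin ⟨v, hv⟩).2
      omega
    · omega
  refine ⟨selFun F, ?_, ?_⟩
  · intro v
    unfold selFun
    split <;> [skip; split] <;> exact Sym2.mem_mk_left _ _
  · refine ⟨SimpleGraph.Coloring.mk (fun v => ⟨colFun F v, hbnd v⟩) ?_⟩
    intro u v hadj hC
    simp only [oneRemoved, SimpleGraph.deleteEdges_adj, Set.mem_range] at hadj
    obtain ⟨hGadj, hnot⟩ := hadj
    have hC' : colFun F u = colFun F v := by simpa using congrArg Fin.val hC
    by_cases hu : u ∈ F <;> by_cases hv : v ∈ F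
    · -- both in the clique
      set i : Fin F.card := F.equivFin ⟨u, hu⟩ with hidef
      set j : Fin F.card := F.equivFin ⟨v, hv⟩ with hjdef
      have hCuv : (i : ℕ) / 3 = (j : ℕ) / 3 := by
        simpa [colFun, dif_pos hu, dif_pos hv] using hC'
      have hijne : (i : ℕ) ≠ (j : ℕ) := by
        intro h
        have hij : i = j := Fin.ext h
        have : (⟨u, hu⟩ : {x // x ∈ F}) = ⟨v, hv⟩ := F.equivFin.injective hij
        exact hGadj.ne (congrArg Subtype.val this)
      have hkey : sigma3 F.card (i : ℕ) = (j : ℕ) ∨ sigma3 F.card (j : ℕ) = (i : ℕ) := by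
        have h1 := i.2
        have h2 := j.2
        unfold sigma3
        split_ifs <;> omega
      rcases hkey with hk | hk
      · refine hnot ⟨u, ?_⟩
        have harg : (⟨sigma3 F.card (i : ℕ), sigma3_lt i.2⟩ : Fin F.card) = j := Fin.ext hk
        have : selFun F u = s(u, v) := by
          simp only [selFun, dif_pos hu, ← hidef, harg, ← hjdef]
          rw [hjdef, Equiv.symm_apply_apply]
        exact this
      · refine hnot ⟨v, ?_⟩
        have harg : (⟨sigma3 F.card (j : ℕ), sigma3_lt j.2⟩ : Fin F.card) = i := Fin.ext hk
        have : selFun F v = s(v, u) := by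
          simp only [selFun, dif_pos hv, ← hjdef, harg, ← hidef]
          rw [hidef, Equiv.symm_apply_apply]
        rw [this, Sym2.eq_swap]
    · -- u in clique, v outside
      set i : Fin F.card := F.equivFin ⟨u, hu⟩ with hidef
      have hCuv : (i : ℕ) / 3 = (F.card + 1) / 3 := by
        simpa [colFun, dif_pos hu, dif_neg hv] using hC'
      have hi := i.2
      have h31 : F.card % 3 = 1 := by omega
      have hlast : (i : ℕ) = F.card - 1 := by omega
      refine hnot ⟨v, ?_⟩
      have harg : (⟨F.card - 1, by omega⟩ : Fin F.card) = i := Fin.ext hlast.symm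
      have : selFun F v = s(v, u) := by
        simp only [selFun, dif_neg hv, dif_pos h31, harg, ← hidef]
        rw [hidef, Equiv.symm_apply_apply]
      rw [this, Sym2.eq_swap]
    · -- v in clique, u outside
      set j : Fin F.card := F.equivFin ⟨v, hv⟩ with hjdef
      have hCuv : (F.card + 1) / 3 = (j : ℕ) / 3 := by
        simpa [colFun, dif_neg hu, dif_pos hv] using hC'
      have hj := j.2
      have h31 : F.card % 3 = 1 := by omega
      have hlast : (j : ℕ) = F.card - 1 := by omega
      refine hnot ⟨u, ?_⟩
      have harg : (⟨F.card - 1, by omega⟩ : Fin F.card) = j := Fin.ext hlast.symm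
      have : selFun F u = s(u, v) := by
        simp only [selFun, dif_neg hu, dif_pos h31, harg, ← hjdef]
        rw [hjdef, Equiv.symm_apply_apply]
      exact this
    · exact hindep u v hu hv hGadj

private lemma card_le_chromNum {V : Type} [Fintype V] {G : SimpleGraph V}
    {F : Finset V} (hclique : G.IsClique ↑F) : F.card ≤ chromNum G := by
  classical
  have hne : {n : ℕ | G.Colorable n}.Nonempty := ⟨Fintype.card V, G.colorable_of_fintype⟩
  have hcol : G.Colorable (chromNum G) := Nat.sInf_mem hne
  obtain ⟨C⟩ := hcol
  calc F.card ≤ (Finset.univ : Finset (Fin (chromNum G))).card := by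
        apply Finset.card_le_card_of_injOn C (fun a _ => Finset.mem_univ _)
        intro a ha b hb hab
        by_contra hne'
        exact C.valid (hclique ha hb hne') hab
      _ = chromNum G := by simp

/-- Every finite split graph `G` satisfies `χ₁(G) ≤ ⌈(χ(G) - 1)/3⌉ + 1`. -/
theorem robustChromNum_le_of_splitGraph
    {V : Type} [Fintype V] [DecidableEq V] (G : SimpleGraph V)
    (hsplit : IsSplitGraph G) :
    robustChromNum G ≤ (chromNum G - 1 + 2) / 3 + 1 := by
  classical
  obtain ⟨A, hAclique, hAindep⟩ := hsplit
  set F : Finset V := A.toFinset with hF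
  have hFclique : G.IsClique ↑F := by
    rwa [hF, Set.coe_toFinset]
  have hFindep : ∀ u v : V, u ∉ F → v ∉ F → ¬ G.Adj u v := by
    intro u v hu hv hadj
    rw [hF, Set.mem_toFinset] at hu hv
    exact hAindep hu hv hadj.ne hadj
  obtain ⟨f, hsel, hcolorable⟩ := exists_good_selection G F hFclique hFindep
  have h1 : robustChromNum G ≤ chromNum (oneRemoved G f) :=
    Nat.sInf_le ⟨f, hsel, rfl⟩
  have h2 : chromNum (oneRemoved G f) ≤ (F.card + 1) / 3 + 1 :=
    Nat.sInf_le hcolorable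
  have h3 : F.card ≤ chromNum G := card_le_chromNum hFclique
  omega
end

section
/- If G is a finite split graph with χ(G) ≡ 1 (mod 3), then the robust chromatic number of G equals (χ(G) + 2)/3. -/
open SimpleGraph

lemma key_card_le_three {V : Type} [DecidableEq V] (G : SimpleGraph V) (f : V → Sym2 V)
    (hf : IsOneSelection G f) (t : Finset V)
    (hcl : ∀ a ∈ t, ∀ b ∈ t, a ≠ b → G.Adj a b)
    (hind : ∀ a ∈ t, ∀ b ∈ t, ¬ (oneRemoved G f).Adj a b) :
    t.card ≤ 3 := by
  classical
  have hpair : ∀ p ∈ t.offDiag, s(p.1, p.2) ∈ Set.range f := by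
    intro p hp
    rw [Finset.mem_offDiag] at hp
    have hadj := hcl p.1 hp.1 p.2 hp.2.1 hp.2.2
    have hni := hind p.1 hp.1 p.2 hp.2.1
    simp only [oneRemoved, SimpleGraph.deleteEdges_adj, not_and, not_not] at hni
    exact hni hadj
  set w : V × V → V := fun p => if h : s(p.1, p.2) ∈ Set.range f then h.choose else p.1 with hw
  have hwf : ∀ p ∈ t.offDiag, f (w p) = s(p.1, p.2) := by
    intro p hp
    have h := hpair p hp
    simp only [hw, dif_pos h]
    exact h.choose_spec
  have hmaps : ∀ p ∈ t.offDiag, w p ∈ t := by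
    intro p hp
    have hm : w p ∈ f (w p) := hf (w p)
    rw [hwf p hp, Sym2.mem_iff] at hm
    rw [Finset.mem_offDiag] at hp
    rcases hm with h | h
    · rw [h]; exact hp.1
    · rw [h]; exact hp.2.1
  have hcard : t.offDiag.card ≤ 2 * t.card := by
    refine Finset.card_le_mul_card_image_of_maps_to hmaps 2 ?_
    intro b _
    rcases hb : f b with ⟨x, y⟩
    have hsub : t.offDiag.filter (fun p => w p = b) ⊆ {(x, y), (y, x)} := by
      intro p hp
      rw [Finset.mem_filter] at hp
      have h1 : f (w p) = s(p.1, p.2) := hwf p hp.1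
      rw [hp.2, hb] at h1
      rw [Sym2.eq_iff] at h1
      simp only [Finset.mem_insert, Finset.mem_singleton]
      rcases h1 with ⟨h, h'⟩ | ⟨h, h'⟩
      · left; exact Prod.ext h.symm h'.symm
      · right; exact Prod.ext h'.symm h.symm
    calc (t.offDiag.filter (fun p => w p = b)).card ≤ ({(x, y), (y, x)} : Finset (V × V)).card :=
            Finset.card_le_card hsub
      _ ≤ 2 := Finset.card_insert_le _ _ |>.trans (by simp)
  rw [Finset.offDiag_card] at hcard
  by_contra h
  push_neg at h
  have h4 : 4 ≤ t.card := h
  have h5 : 4 * t.card ≤ t.card * t.card := Nat.mul_le_mul_right _ h4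
  omega

lemma lower_bound_s3 {V : Type} [Fintype V] [DecidableEq V] (G : SimpleGraph V)
    (hsplit : IsSplitGraph G) {k : ℕ} (hchi : chromNum G = 3 * k + 1)
    (f : V → Sym2 V) (hf : IsOneSelection G f) :
    k + 1 ≤ chromNum (oneRemoved G f) := by
  classical
  set H := oneRemoved G f with hH
  have hcolV : H.Colorable (Fintype.card V) := H.colorable_of_fintype
  have hmem : chromNum H ∈ {n : ℕ | H.Colorable n} := Nat.sInf_mem ⟨_, hcolV⟩
  set n := chromNum H with hn
  by_contra hlt
  push_neg at hlt
  have hnk : n ≤ k := by omega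
  obtain ⟨C⟩ : H.Colorable n := hmem
  -- n = 0 impossible
  have hn0 : 1 ≤ n := by
    by_contra h0
    have hne : n = 0 := by omega
    rw [hne] at C
    have hVempty : IsEmpty V := ⟨fun v => (C v).elim0⟩
    have : G.Colorable 0 := ⟨⟨fun v => isEmptyElim v, fun {u v} h => isEmptyElim u⟩⟩
    have : chromNum G ≤ 0 := Nat.sInf_le this
    omega
  have hk1 : 1 ≤ k := le_trans hn0 hnk
  obtain ⟨A, hA, hB⟩ := hsplit
  have hAfin : A.Finite := Set.toFinite A
  set t : Finset V := hAfin.toFinset with ht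
  have hmemt : ∀ v : V, v ∈ t ↔ v ∈ A := fun v => hAfin.mem_toFinset
  set a := t.card with ha
  set e : ↥t ≃ Fin a := Fintype.equivFinOfCardEq (Fintype.card_coe t) with he
  -- (1) chromNum G ≤ a + 1
  have hcol1 : G.Colorable (a + 1) := by
    refine ⟨⟨fun v => if h : v ∈ t then (e ⟨v, h⟩).castSucc else Fin.last a, ?_⟩⟩
    intro u v hadj hc
    by_cases hu : u ∈ t <;> by_cases hv : v ∈ t
    · rw [dif_pos hu, dif_pos hv] at hc
      have : u = v := by
        have := e.injective (Fin.castSucc_injective _ hc)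
        exact congrArg Subtype.val this
      exact hadj.ne this
    · rw [dif_pos hu, dif_neg hv] at hc
      exact absurd hc (Fin.ne_of_lt (Fin.castSucc_lt_last _))
    · rw [dif_neg hu, dif_pos hv] at hc
      exact absurd hc.symm (Fin.ne_of_lt (Fin.castSucc_lt_last _))
    · have hu' : u ∈ Aᶜ := fun h => hu ((hmemt u).2 h)
      have hv' : v ∈ Aᶜ := fun h => hv ((hmemt v).2 h)
      exact hB hu' hv' hadj.ne hadj
  have hle1 : chromNum G ≤ a + 1 := Nat.sInf_le hcol1
  have ha3k : 3 * k ≤ a := by omega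
  -- (2) fibers of C on t
  set fib : Fin n → Finset V := fun i => t.filter (fun v => C v = i) with hfib
  have hfibsub : ∀ i, fib i ⊆ t := fun i => Finset.filter_subset _ _
  have hfibcard : ∀ i, (fib i).card ≤ 3 := by
    intro i
    refine key_card_le_three G f hf (fib i) ?_ ?_
    · intro x hx y hy hxy
      exact hA ((hmemt x).1 (hfibsub i hx)) ((hmemt y).1 (hfibsub i hy)) hxy
    · intro x hx y hy hadj
      rcases eq_or_ne x y with rfl | hxy
      · exact H.irrefl hadj
      · have hcx := (Finset.mem_filter.1 hx).2
        have hcy := (Finset.mem_filter.1 hy).2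
        exact C.valid hadj (hcx.trans hcy.symm)
  have hsum : a = ∑ i : Fin n, (fib i).card := by
    rw [ha]
    exact Finset.card_eq_sum_card_fiberwise (fun v _ => Finset.mem_univ (C v))
  have hsum3 : a ≤ 3 * n := by
    calc a = ∑ i : Fin n, (fib i).card := hsum
      _ ≤ ∑ _i : Fin n, 3 := Finset.sum_le_sum (fun i _ => hfibcard i)
      _ = 3 * n := by simp [mul_comm]
  have haeq : a = 3 * k := by omega
  have hnk' : n = k := by omega
  have hfibeq : ∀ i : Fin n, (fib i).card = 3 := by
    have h1 : ∑ i : Fin n, (fib i).card = ∑ _i : Fin n, 3 := by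
      rw [← hsum]; simp [haeq, hnk', mul_comm]
    have := (Finset.sum_eq_sum_iff_of_le (fun i _ => hfibcard i)).1 h1
    exact fun i => this i (Finset.mem_univ i)
  -- (3) there is b outside t adjacent to all of t
  have hnotcol : ¬ G.Colorable a := by
    intro hc
    have hx : chromNum G ≤ a := Nat.sInf_le hc
    omega
  have hbex : ∃ b, b ∉ t ∧ ∀ w ∈ t, G.Adj b w := by
    by_contra hno
    push_neg at hno
    apply hnotcol
    have hapos : 0 < a := by omega
    refine ⟨⟨fun v => if h : v ∈ t then e ⟨v, h⟩
        else e ⟨(hno v h).choose, (hno v h).choose_spec.1⟩, ?_⟩⟩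
    intro u v hadj hc
    by_cases hu : u ∈ t <;> by_cases hv : v ∈ t
    · rw [dif_pos hu, dif_pos hv] at hc
      exact hadj.ne (congrArg Subtype.val (e.injective hc))
    · rw [dif_pos hu, dif_neg hv] at hc
      have hux : u = (hno v hv).choose := congrArg Subtype.val (e.injective hc)
      have hne := (hno v hv).choose_spec.2
      rw [← hux] at hne
      exact hne hadj.symm
    · rw [dif_neg hu, dif_pos hv] at hc
      have hvx : (hno u hu).choose = v := congrArg Subtype.val (e.injective hc)
      have hne := (hno u hu).choose_spec.2
      rw [hvx] at hne
      exact hne hadj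
    · have hu' : u ∈ Aᶜ := fun h => hu ((hmemt u).2 h)
      have hv' : v ∈ Aᶜ := fun h => hv ((hmemt v).2 h)
      exact hB hu' hv' hadj.ne hadj
  obtain ⟨b, hbt, hball⟩ := hbex
  -- (4) contradiction via the 4-set
  set S := insert b (fib (C b)) with hS
  have hbnot : b ∉ fib (C b) := fun h => hbt (hfibsub _ h)
  have hScard : S.card = 4 := by
    rw [hS, Finset.card_insert_of_notMem hbnot, hfibeq]
  have hS3 : S.card ≤ 3 := by
    refine key_card_le_three G f hf S ?_ ?_
    · intro x hx y hy hxy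
      rw [hS, Finset.mem_insert] at hx hy
      rcases hx with rfl | hx <;> rcases hy with rfl | hy
      · exact absurd rfl hxy
      · exact hball y (hfibsub _ hy)
      · exact (hball x (hfibsub _ hx)).symm
      · exact hA ((hmemt x).1 (hfibsub _ hx)) ((hmemt y).1 (hfibsub _ hy)) hxy
    · intro x hx y hy hadj
      rcases eq_or_ne x y with rfl | hxy
      · exact H.irrefl hadj
      · have hcx : C x = C b := by
          rw [hS, Finset.mem_insert] at hx
          rcases hx with rfl | hx
          · rfl
          · exact (Finset.mem_filter.1 hx).2
        have hcy : C y = C b := by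
          rw [hS, Finset.mem_insert] at hy
          rcases hy with rfl | hy
          · rfl
          · exact (Finset.mem_filter.1 hy).2
        exact C.valid hadj (hcx.trans hcy.symm)
  omega

lemma upper_exists {V : Type} [Fintype V] [DecidableEq V] (G : SimpleGraph V)
    (hsplit : IsSplitGraph G) {k : ℕ} (hchi : chromNum G = 3 * k + 1) :
    ∃ f : V → Sym2 V, IsOneSelection G f ∧ (oneRemoved G f).Colorable (k + 1) := by
  classical
  obtain ⟨A, hA, hB⟩ := hsplit
  have hAfin : A.Finite := Set.toFinite A
  set t : Finset V := hAfin.toFinset with ht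
  have hmemt : ∀ v : V, v ∈ t ↔ v ∈ A := fun v => hAfin.mem_toFinset
  set a := t.card with ha
  set e : ↥t ≃ Fin a := Fintype.equivFinOfCardEq (Fintype.card_coe t) with he
  have hcardle : a ≤ 3 * k + 1 := by
    have h1 : G.IsClique ↑t := by rwa [Set.Finite.coe_toFinset]
    have h2 : G.Colorable (chromNum G) := Nat.sInf_mem (s := {n : ℕ | G.Colorable n}) ⟨_, G.colorable_of_fintype⟩
    have h3 := h1.card_le_of_colorable h2
    omega
  set p : ℕ → ℕ := fun j => 3 * (j / 3) + ((j % 3 + 1) % 3) with hp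
  set f : V → Sym2 V := fun w =>
    if h : w ∈ t then
      (if hq : p (e ⟨w, h⟩ : ℕ) < a then s(w, (e.symm ⟨p (e ⟨w, h⟩ : ℕ), hq⟩ : V))
       else s(w, w))
    else
      (if hx : 3 * k < a then s(w, (e.symm ⟨3 * k, hx⟩ : V)) else s(w, w)) with hfdef
  have hsel : IsOneSelection G f := by
    intro v
    simp only [hfdef]
    split_ifs <;> simp
  refine ⟨f, hsel, ?_⟩
  refine ⟨⟨fun w => if h : w ∈ t then
      ⟨(e ⟨w, h⟩ : ℕ) / 3, by have := (e ⟨w, h⟩).isLt; omega⟩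
      else ⟨k, Nat.lt_succ_self k⟩, ?_⟩⟩
  intro u v hadj hc
  rw [oneRemoved, SimpleGraph.deleteEdges_adj] at hadj
  obtain ⟨hGadj, hnr⟩ := hadj
  by_cases hu : u ∈ t <;> by_cases hv : v ∈ t
  · rw [dif_pos hu, dif_pos hv] at hc
    have hcc : (e ⟨u, hu⟩ : ℕ) / 3 = (e ⟨v, hv⟩ : ℕ) / 3 := congrArg Fin.val hc
    set ju := (e ⟨u, hu⟩ : ℕ) with hju
    set jv := (e ⟨v, hv⟩ : ℕ) with hjv
    have hne : ju ≠ jv := by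
      intro h
      have h1 : e ⟨u, hu⟩ = e ⟨v, hv⟩ := Fin.ext h
      have h2 : u = v := congrArg Subtype.val (e.injective h1)
      exact hGadj.ne h2
    have hdis : p ju = jv ∨ p jv = ju := by
      simp only [hp]; omega
    apply hnr
    rcases hdis with heq | heq
    · have hq : p ju < a := by rw [heq]; exact (e ⟨v, hv⟩).isLt
      have hsv : (e.symm ⟨p ju, hq⟩ : V) = v := by
        have h1 : (⟨p ju, hq⟩ : Fin a) = e ⟨v, hv⟩ := Fin.ext heq
        rw [h1, e.symm_apply_apply]
      refine ⟨u, ?_⟩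
      simp only [hfdef]
      rw [dif_pos hu, dif_pos hq, hsv]
    · have hq : p jv < a := by rw [heq]; exact (e ⟨u, hu⟩).isLt
      have hsv : (e.symm ⟨p jv, hq⟩ : V) = u := by
        have h1 : (⟨p jv, hq⟩ : Fin a) = e ⟨u, hu⟩ := Fin.ext heq
        rw [h1, e.symm_apply_apply]
      refine ⟨v, ?_⟩
      simp only [hfdef]
      rw [dif_pos hv, dif_pos hq, hsv, Sym2.eq_swap]
  · rw [dif_pos hu, dif_neg hv] at hc
    have hcc : (e ⟨u, hu⟩ : ℕ) / 3 = k := congrArg Fin.val hc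
    have hlt := (e ⟨u, hu⟩).isLt
    have hjeq : (e ⟨u, hu⟩ : ℕ) = 3 * k := by omega
    have hx : 3 * k < a := by omega
    have hsu : (e.symm ⟨3 * k, hx⟩ : V) = u := by
      have h1 : (⟨3 * k, hx⟩ : Fin a) = e ⟨u, hu⟩ := Fin.ext hjeq.symm
      rw [h1, e.symm_apply_apply]
    apply hnr
    refine ⟨v, ?_⟩
    simp only [hfdef]
    rw [dif_neg hv, dif_pos hx, hsu, Sym2.eq_swap]
  · rw [dif_neg hu, dif_pos hv] at hc
    have hcc : (e ⟨v, hv⟩ : ℕ) / 3 = k := (congrArg Fin.val hc).symm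
    have hlt := (e ⟨v, hv⟩).isLt
    have hjeq : (e ⟨v, hv⟩ : ℕ) = 3 * k := by omega
    have hx : 3 * k < a := by omega
    have hsv : (e.symm ⟨3 * k, hx⟩ : V) = v := by
      have h1 : (⟨3 * k, hx⟩ : Fin a) = e ⟨v, hv⟩ := Fin.ext hjeq.symm
      rw [h1, e.symm_apply_apply]
    apply hnr
    refine ⟨u, ?_⟩
    simp only [hfdef]
    rw [dif_neg hu, dif_pos hx, hsv]
  · have hu' : u ∈ Aᶜ := fun h => hu ((hmemt u).2 h)
    have hv' : v ∈ Aᶜ := fun h => hv ((hmemt v).2 h)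
    exact hB hu' hv' hGadj.ne hGadj

/-- If `G` is a finite split graph with `χ(G) ≡ 1 (mod 3)`, then
`χ₁(G) = (χ(G) + 2)/3`. -/
theorem robustChromNum_of_splitGraph_mod_three
    {V : Type} [Fintype V] [DecidableEq V] (G : SimpleGraph V)
    (hsplit : IsSplitGraph G) (hmod : chromNum G % 3 = 1) :
    robustChromNum G = (chromNum G + 2) / 3 := by
  classical
  set k := chromNum G / 3 with hk
  have hchi : chromNum G = 3 * k + 1 := by omega
  obtain ⟨f, hf, hcol⟩ := upper_exists G hsplit hchi
  have hle : chromNum (oneRemoved G f) ≤ k + 1 := Nat.sInf_le hcol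
  have hge := lower_bound_s3 G hsplit hchi f hf
  have heq : chromNum (oneRemoved G f) = k + 1 := le_antisymm hle hge
  have hmem : k + 1 ∈ {m : ℕ | ∃ f : V → Sym2 V,
      IsOneSelection G f ∧ chromNum (oneRemoved G f) = m} := ⟨f, hf, heq⟩
  have h1 : robustChromNum G = k + 1 := by
    apply le_antisymm (Nat.sInf_le hmem)
    refine le_csInf ⟨_, hmem⟩ ?_
    rintro m ⟨g, hg, rfl⟩
    exact lower_bound_s3 G hsplit hchi g hg
  rw [h1]
  omega
end

section
/- If G is a finite chordal graph, then ω₁(G) ≤ χ₁(G) ≤ ⌈χ(G)/2⌉. -/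
open SimpleGraph

section RobustAux

open SimpleGraph Walk

variable {V : Type}

private lemma aux_edge_index {G : SimpleGraph V} {u v : V} (p : G.Walk u v) (e : Sym2 V)
    (he : e ∈ p.edges) : ∃ k, k < p.length ∧ e = s(p.getVert k, p.getVert (k + 1)) := by
  induction p with
  | nil => simp at he
  | cons h q ih =>
    rw [Walk.edges_cons, List.mem_cons] at he
    rcases he with he | he
    · refine ⟨0, by simp, ?_⟩
      rw [he]
      simp [Walk.getVert_zero, Walk.getVert_cons_succ]
    · obtain ⟨k, hk, hke⟩ := ih he
      exact ⟨k + 1, by simpa using Nat.succ_lt_succ hk,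
        by simpa [Walk.getVert_cons_succ] using hke⟩

private lemma aux_getVert_getElem {G : SimpleGraph V} {u v : V} (p : G.Walk u v) :
    ∀ (k : ℕ) (hk : k < p.support.length), p.getVert k = p.support[k] := by
  induction p with
  | nil =>
    intro k hk
    simp only [Walk.support_nil, List.length_cons, List.length_nil] at hk
    have : k = 0 := by omega
    subst this
    simp [Walk.getVert_zero]
  | cons h q ih =>
    intro k hk
    cases k with
    | zero => simp [Walk.getVert_zero]
    | succ k =>
      have hk' : k < q.support.length := by
        simp only [Walk.support_cons, List.length_cons] at hk
        omega
      simp only [Walk.getVert_cons_succ, Walk.support_cons, List.getElem_cons_succ]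
      exact ih k hk'

private lemma aux_cycle_getVert_inj {G : SimpleGraph V} {u : V} {p : G.Walk u u}
    (hp : p.IsCycle) {i j : ℕ} (hi : i < p.length) (hj : j < p.length)
    (h : p.getVert i = p.getVert j) : i = j := by
  have hnd : p.support.tail.Nodup := hp.2
  have hslen : p.support.length = p.length + 1 := p.length_support
  have htlen : p.support.tail.length = p.length := by
    rw [p.support_eq_cons] at hslen
    simpa using hslen
  have htl : ∀ k (hk : k < p.length), p.getVert (k + 1) = p.support.tail[k]'(by omega) := by
    intro k hk
    rw [aux_getVert_getElem p (k + 1) (by omega)]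
    rw [List.getElem_of_eq p.support_eq_cons, List.getElem_cons_succ]
  have h1 : 1 ≤ p.length := by
    have := hp.three_le_length; omega
  rcases Nat.eq_zero_or_pos i with hi0 | hi1 <;> rcases Nat.eq_zero_or_pos j with hj0 | hj1
  · omega
  · exfalso
    subst hi0
    have hu0 : p.getVert 0 = u := p.getVert_zero
    have hulen : p.getVert (p.length - 1 + 1) = u := by
      have : p.length - 1 + 1 = p.length := by omega
      rw [this, p.getVert_length]
    have e1 : p.support.tail[j - 1]'(by omega) = p.support.tail[p.length - 1]'(by omega) := by
      rw [← htl (j - 1) (by omega), ← htl (p.length - 1) (by omega)]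
      have : j - 1 + 1 = j := by omega
      rw [this, ← h, hu0, hulen]
    have := (hnd.getElem_inj_iff).mp e1
    omega
  · exfalso
    subst hj0
    have hu0 : p.getVert 0 = u := p.getVert_zero
    have hulen : p.getVert (p.length - 1 + 1) = u := by
      have : p.length - 1 + 1 = p.length := by omega
      rw [this, p.getVert_length]
    have e1 : p.support.tail[i - 1]'(by omega) = p.support.tail[p.length - 1]'(by omega) := by
      rw [← htl (i - 1) (by omega), ← htl (p.length - 1) (by omega)]
      have : i - 1 + 1 = i := by omega
      rw [this, h, hu0, hulen]
    have := (hnd.getElem_inj_iff).mp e1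
    omega
  · have e1 : p.support.tail[i - 1]'(by omega) = p.support.tail[j - 1]'(by omega) := by
      rw [← htl (i - 1) (by omega), ← htl (j - 1) (by omega)]
      have hii : i - 1 + 1 = i := by omega
      have hjj : j - 1 + 1 = j := by omega
      rw [hii, hjj, h]
    have := (hnd.getElem_inj_iff).mp e1
    omega

private lemma aux_hue_const {H : SimpleGraph V} {c : V → ℕ}
    (hh : ∀ ⦃a b⦄, H.Adj a b → c a / 2 = c b / 2) :
    ∀ {a b : V} (w : H.Walk a b) (x : V), x ∈ w.support → c x / 2 = c a / 2 := by
  intro a b w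
  induction w with
  | nil =>
    intro x hx
    simp only [Walk.support_nil, List.mem_cons, List.not_mem_nil, or_false] at hx
    subst hx; rfl
  | cons hadj q ih =>
    intro x hx
    rw [Walk.support_cons, List.mem_cons] at hx
    rcases hx with rfl | hx
    · rfl
    · rw [ih x hx, (hh hadj).symm]

private lemma aux_mem_tail_closed {G : SimpleGraph V} {u : V} {p : G.Walk u u}
    (hnil : ¬ p.Nil) {y : V} (hy : y ∈ p.support) : y ∈ p.support.tail := by
  cases p with
  | nil => simp at hnil
  | cons h q =>
    rw [Walk.support_cons] at hy
    simp only [Walk.support_cons, List.tail_cons]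
    rcases List.mem_cons.mp hy with rfl | hy
    · exact q.end_mem_support
    · exact hy

private lemma aux_cliqueNum_le_chromNum [Fintype V] (G : SimpleGraph V) :
    G.cliqueNum ≤ chromNum G := by
  have hcol : G.Colorable (chromNum G) :=
    Nat.sInf_mem (s := {n | G.Colorable n}) ⟨Fintype.card V, G.colorable_of_fintype⟩
  obtain ⟨s, hs⟩ := G.exists_isNClique_cliqueNum
  by_contra hlt
  push_neg at hlt
  exact hcol.cliqueFree hlt s hs

private lemma aux_fin_consec {n : ℕ} (hn : 2 ≤ n) (i j : Fin n) :
    ((j - i : Fin n) : ℕ) = 1 ↔ (j.val = i.val + 1 ∨ (i.val = n - 1 ∧ j.val = 0)) := by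
  have hi := i.2
  have hj := j.2
  rw [Fin.sub_def]
  simp only
  constructor
  · intro h
    rcases lt_or_ge (n - i.val + j.val) n with hlt | hge
    · rw [Nat.mod_eq_of_lt hlt] at h; omega
    · rw [Nat.mod_eq_sub_mod hge, Nat.mod_eq_of_lt (by omega)] at h; omega
  · intro h
    rcases h with h | ⟨h1, h2⟩
    · have e : n - i.val + j.val = n + 1 := by omega
      rw [e, Nat.add_mod_left, Nat.mod_eq_of_lt (by omega)]
    · have e : n - i.val + j.val = 1 := by omega
      rw [e, Nat.mod_eq_of_lt (by omega)]

private lemma aux_exists_selection [DecidableEq V] {H : SimpleGraph V} (hac : H.IsAcyclic) :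
    ∃ f : V → Sym2 V, (∀ v, v ∈ f v) ∧ ∀ ⦃a b⦄, H.Adj a b → s(a, b) ∈ Set.range f := by
  classical
  have huniq := isAcyclic_iff_path_unique.mp hac
  set rt : V → V := fun v => (H.connectedComponentMk v).out with hrt
  have hreach : ∀ v, H.Reachable v (rt v) := by
    intro v
    have h1 : H.connectedComponentMk (rt v) = H.connectedComponentMk v :=
      Quot.out_eq (H.connectedComponentMk v)
    exact (ConnectedComponent.exact h1).symm
  have pw : ∀ v, H.Path v (rt v) := fun v => ((hreach v).some).toPath
  refine ⟨fun v => if v = rt v then s(v, v) else s(v, ((pw v : H.Walk v (rt v))).getVert 1),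
    ?_, ?_⟩
  · intro v
    show v ∈ (if v = rt v then s(v, v) else s(v, ((pw v : H.Walk v (rt v))).getVert 1))
    by_cases h : v = rt v
    · rw [if_pos h]; simp
    · rw [if_neg h]; simp
  · intro a b hab
    have key : ∀ x y (hxy : H.Adj x y) (hx : x ≠ rt x)
        (hymem : y ∈ (pw x : H.Walk x (rt x)).support),
        (pw x : H.Walk x (rt x)).getVert 1 = y := by
      intro x y hxy hx hymem
      set p : H.Walk x (rt x) := (pw x : H.Walk x (rt x)) with hpdef
      have hp : p.IsPath := (pw x).2
      set s' : H.Walk y (rt x) := p.dropUntil y hymem with hs'def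
      have hdrop : s'.IsPath := hp.dropUntil hymem
      have hspec : (p.takeUntil y hymem).append s' = p := p.take_spec hymem
      have hnd : p.support.Nodup := hp.support_nodup
      have hxns : x ∉ s'.support := by
        intro hxs
        have hsupp : p.support = (p.takeUntil y hymem).support ++ s'.support.tail := by
          have := Walk.support_append (p.takeUntil y hymem) s'
          rw [hspec] at this
          exact this
        rw [s'.support_eq_cons] at hxs
        rcases List.mem_cons.mp hxs with rfl | hxs
        · exact hxy.ne rfl
        · have hx1 : x ∈ (p.takeUntil y hymem).support := Walk.start_mem_support _
          rw [hsupp] at hnd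
          exact (List.disjoint_of_nodup_append hnd) hx1 hxs
      have hw : (Walk.cons hxy s').IsPath := hdrop.cons hxns
      have heq : (⟨Walk.cons hxy s', hw⟩ : H.Path x (rt x)) = pw x := huniq _ _
      have heqw : p = Walk.cons hxy s' := congrArg Subtype.val heq.symm
      rw [heqw]
      exact (Walk.getVert_cons_succ (n := 0) s' hxy).trans s'.getVert_zero
    have hrteq : rt a = rt b := by
      rw [hrt]
      exact congrArg Quot.out (ConnectedComponent.sound hab.reachable)
    by_cases ha : a = rt a
    · have hb : b ≠ rt b := by
        rw [← hrteq, ← ha]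
        exact hab.ne'
      have hmem : a ∈ (pw b : H.Walk b (rt b)).support := by
        have hab2 : a = rt b := ha.trans hrteq
        rw [hab2]
        exact Walk.end_mem_support _
      refine ⟨b, ?_⟩
      show (if b = rt b then s(b, b) else s(b, ((pw b : H.Walk b (rt b))).getVert 1)) = s(a, b)
      rw [if_neg hb, key b a hab.symm hb hmem, Sym2.eq_swap]
    · by_cases hmem : b ∈ (pw a : H.Walk a (rt a)).support
      · refine ⟨a, ?_⟩
        show (if a = rt a then s(a, a) else s(a, ((pw a : H.Walk a (rt a))).getVert 1)) = s(a, b)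
        rw [if_neg ha, key a b hab ha hmem]
      · have hb : b ≠ rt b := by
          intro h
          apply hmem
          have hba : b = rt a := h.trans hrteq.symm
          rw [hba]
          exact Walk.end_mem_support _
        set w : H.Walk b (rt b) := (Walk.cons hab.symm (pw a : H.Walk a (rt a))).copy rfl hrteq
          with hwdef
        have hwpath : w.IsPath := by
          rw [hwdef, Walk.isPath_copy]
          exact ((pw a).2).cons hmem
        have heq : (⟨w, hwpath⟩ : H.Path b (rt b)) = pw b := huniq _ _
        have heqw : (pw b : H.Walk b (rt b)) = w := congrArg Subtype.val heq.symm
        refine ⟨b, ?_⟩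
        show (if b = rt b then s(b, b) else s(b, ((pw b : H.Walk b (rt b))).getVert 1)) = s(a, b)
        have hg : (pw b : H.Walk b (rt b)).getVert 1 = a := by
          rw [heqw, hwdef, Walk.getVert_copy]
          exact (Walk.getVert_cons_succ (n := 0) _ hab.symm).trans (Walk.getVert_zero _)
        rw [if_neg hb, hg, Sym2.eq_swap]

private lemma aux_half_acyclic [DecidableEq V] {G H : SimpleGraph V} {c : V → ℕ}
    (hle : ∀ ⦃a b⦄, H.Adj a b → G.Adj a b)
    (hhalf : ∀ ⦃a b⦄, H.Adj a b → c a / 2 = c b / 2)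
    (hproper : ∀ ⦃a b⦄, G.Adj a b → c a ≠ c b)
    (hH : ∀ ⦃a b⦄, G.Adj a b → c a / 2 = c b / 2 → H.Adj a b)
    (hchordal : IsChordalGraph G) : H.IsAcyclic := by
  by_contra hcyc
  unfold SimpleGraph.IsAcyclic at hcyc
  push_neg at hcyc
  obtain ⟨v₀, p₀, hp₀⟩ := hcyc
  set S : Set ℕ := {n | ∃ (v : V) (p : H.Walk v v), p.IsCycle ∧ p.length = n} with hSdef
  have hS : S.Nonempty := ⟨p₀.length, v₀, p₀, hp₀, rfl⟩
  obtain ⟨u, p, hp, hlen⟩ := Nat.sInf_mem hS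
  set n := sInf S with hndef
  have hmin : ∀ m ∈ S, n ≤ m := fun m hm => Nat.sInf_le hm
  have h3 : 3 ≤ n := hlen ▸ hp.three_le_length
  have chord : ∀ x y, x ∈ p.support → y ∈ p.support → H.Adj x y → s(x, y) ∈ p.edges := by
    intro x y hx hy hxy
    by_contra hne
    set p' : H.Walk x x := p.rotate x hx with hp'def
    have hp' : p'.IsCycle := hp.rotate hx
    have hlen' : p'.length = p.length := by
      have h1 := congrArg Walk.length (p.take_spec hx)
      rw [Walk.length_append] at h1
      rw [hp'def]
      unfold Walk.rotate
      rw [Walk.length_append]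
      omega
    have hedge' : s(x, y) ∉ p'.edges := fun h => hne ((p.rotate_edges x hx).mem_iff.mp h)
    have hy' : y ∈ p'.support := by
      have hyt : y ∈ p.support.tail := aux_mem_tail_closed hp.not_nil hy
      have := (p.support_rotate x hx).mem_iff.mpr hyt
      exact List.mem_of_mem_tail this
    have hxyne : x ≠ y := hxy.ne
    set q : H.Walk x y := p'.takeUntil y hy' with hqdef
    set r : H.Walk y x := p'.dropUntil y hy' with hrdef
    have hspec : q.append r = p' := p'.take_spec hy'
    have hnd : p'.support.tail.Nodup := hp'.2
    have hsupp : p'.support = q.support ++ r.support.tail := by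
      have := Walk.support_append q r
      rw [hspec] at this
      exact this
    have htail : p'.support.tail = q.support.tail ++ r.support.tail := by
      rw [hsupp, q.support_eq_cons]
      simp
    rw [htail] at hnd
    have hdisj := List.disjoint_of_nodup_append hnd
    have hnd1 := hnd.of_append_left
    have hnd2 := hnd.of_append_right
    have hxr : x ∈ r.support.tail := by
      have h1 : x ∈ r.support := r.end_mem_support
      rw [r.support_eq_cons] at h1
      rcases List.mem_cons.mp h1 with h1 | h1
      · exact absurd h1 hxyne
      · exact h1
    have hyq : y ∈ q.support.tail := by
      have h1 : y ∈ q.support := q.end_mem_support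
      rw [q.support_eq_cons] at h1
      rcases List.mem_cons.mp h1 with h1 | h1
      · exact absurd h1 hxyne.symm
      · exact h1
    have hqpath : q.IsPath := by
      rw [Walk.isPath_def, q.support_eq_cons]
      exact List.Nodup.cons (fun hmem => hdisj hmem hxr) hnd1
    have hrpath : r.IsPath := by
      rw [Walk.isPath_def, r.support_eq_cons]
      exact List.Nodup.cons (fun hmem => hdisj hyq hmem) hnd2
    have hc1 : (Walk.cons hxy r).IsCycle := by
      rw [Walk.cons_isCycle_iff]
      exact ⟨hrpath, fun h => hedge' (Walk.edges_dropUntil_subset p' hy' h)⟩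
    have hc2 : (Walk.cons hxy.symm q).IsCycle := by
      rw [Walk.cons_isCycle_iff]
      refine ⟨hqpath, fun h => hedge' ?_⟩
      have := Walk.edges_takeUntil_subset p' hy' h
      rwa [Sym2.eq_swap] at this
    have hm1 : n ≤ r.length + 1 := hmin _ ⟨x, Walk.cons hxy r, hc1, by simp⟩
    have hm2 : n ≤ q.length + 1 := hmin _ ⟨y, Walk.cons hxy.symm q, hc2, by simp⟩
    have hsum : q.length + r.length = n := by
      have h1 := congrArg Walk.length hspec
      rw [Walk.length_append] at h1
      omega
    omega
  have hhue : ∀ x ∈ p.support, c x / 2 = c u / 2 := fun x hx => aux_hue_const hhalf p x hx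
  have hadj01 : ∀ k, k < p.length → H.Adj (p.getVert k) (p.getVert (k + 1)) :=
    fun k hk => p.adj_getVert_succ hk
  rcases eq_or_lt_of_le h3 with h3' | h4
  · -- triangle case
    have hl : p.length = 3 := by omega
    have l01 : H.Adj (p.getVert 0) (p.getVert 1) := hadj01 0 (by omega)
    have l12 : H.Adj (p.getVert 1) (p.getVert 2) := hadj01 1 (by omega)
    have l23 : H.Adj (p.getVert 2) (p.getVert 3) := hadj01 2 (by omega)
    have h30 : p.getVert 3 = p.getVert 0 := by
      rw [p.getVert_zero, ← hl, p.getVert_length]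
    rw [h30] at l23
    have d01 := hproper (hle l01)
    have d12 := hproper (hle l12)
    have d20 := hproper (hle l23)
    have e01 := hhalf l01
    have e12 := hhalf l12
    omega
  · -- n ≥ 4 : build induced cycle, contradict chordality
    have hn4 : 4 ≤ n := h4
    apply hchordal n hn4
    have hinj : ∀ (i j : Fin n), p.getVert i.val = p.getVert j.val → i = j := by
      intro i j hij
      have hi2 := i.2
      have hj2 := j.2
      have := aux_cycle_getVert_inj hp (i := i.val) (j := j.val) (by omega) (by omega) hij
      exact Fin.ext this
    refine ⟨⟨fun i => p.getVert i.val, by intro i j hij; exact hinj i j hij⟩, ?_⟩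
    intro i j
    have hi2 := i.2
    have hj2 := j.2
    show (G.Adj (p.getVert i.val) (p.getVert j.val) ↔ (cycleGraph n).Adj i j)
    have himem : p.getVert i.val ∈ p.support :=
      Walk.mem_support_iff_exists_getVert.mpr ⟨i.val, rfl, by omega⟩
    have hjmem : p.getVert j.val ∈ p.support :=
      Walk.mem_support_iff_exists_getVert.mpr ⟨j.val, rfl, by omega⟩
    constructor
    · intro hadj
      have hH' : H.Adj (p.getVert i.val) (p.getVert j.val) := by
        refine hH hadj ?_
        rw [hhue _ himem, hhue _ hjmem]
      have hmem := chord _ _ himem hjmem hH'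
      obtain ⟨k, hk, hke⟩ := aux_edge_index p _ hmem
      rw [cycleGraph_adj']
      rw [Sym2.eq_iff] at hke
      have hkn : k < n := by omega
      rcases hke with ⟨hik, hjk⟩ | ⟨hik, hjk⟩
      · -- getVert i = getVert k, getVert j = getVert (k+1)
        have hik' : i.val = k := aux_cycle_getVert_inj hp (by omega) (by omega) hik
        rcases lt_or_eq_of_le (Nat.succ_le_of_lt hk) with hk1 | hk1
        · have hjk' : j.val = k + 1 := aux_cycle_getVert_inj hp (by omega) (by omega) hjk
          right
          rw [aux_fin_consec (by omega)]
          left; omega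
        · -- k + 1 = p.length
          have hk1' : k + 1 = p.length := hk1
          have hj0 : p.getVert j.val = p.getVert 0 := by
            rw [hjk, hk1', p.getVert_length, p.getVert_zero]
          have hj0' : j.val = 0 := aux_cycle_getVert_inj hp (by omega) (by omega) hj0
          right
          rw [aux_fin_consec (by omega)]
          right
          constructor <;> omega
      · have hik' : j.val = k := aux_cycle_getVert_inj hp (by omega) (by omega) hjk
        rcases lt_or_eq_of_le (Nat.succ_le_of_lt hk) with hk1 | hk1
        · have hjk' : i.val = k + 1 := aux_cycle_getVert_inj hp (by omega) (by omega) hik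
          left
          rw [aux_fin_consec (by omega)]
          left; omega
        · have hk1' : k + 1 = p.length := hk1
          have hj0 : p.getVert i.val = p.getVert 0 := by
            rw [hik, hk1', p.getVert_length, p.getVert_zero]
          have hj0' : i.val = 0 := aux_cycle_getVert_inj hp (by omega) (by omega) hj0
          left
          rw [aux_fin_consec (by omega)]
          right
          constructor <;> omega
    · intro hadj
      rw [cycleGraph_adj'] at hadj
      have hwrap : p.getVert 0 = p.getVert p.length := by
        rw [p.getVert_zero, p.getVert_length]
      rcases hadj with h1 | h1
      · rw [aux_fin_consec (by omega)] at h1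
        rcases h1 with h1 | ⟨h1, h2⟩
        · have := hadj01 j.val (by omega)
          rw [← h1] at this
          exact (hle this).symm
        · have := hadj01 (n - 1) (by omega)
          have e1 : n - 1 + 1 = p.length := by omega
          rw [e1, ← hwrap] at this
          have ei : i.val = 0 := h2
          have ej : j.val = n - 1 := h1
          rw [ei, ej]
          exact (hle this).symm
      · rw [aux_fin_consec (by omega)] at h1
        rcases h1 with h1 | ⟨h1, h2⟩
        · have := hadj01 i.val (by omega)
          rw [← h1] at this
          exact hle this
        · have := hadj01 (n - 1) (by omega)
          have e1 : n - 1 + 1 = p.length := by omega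
          rw [e1, ← hwrap] at this
          have ei : i.val = n - 1 := h1
          have ej : j.val = 0 := h2
          rw [ei, ej]
          exact hle this

end RobustAux

/-- If `G` is a finite chordal graph, then `ω₁(G) ≤ χ₁(G) ≤ ⌈χ(G)/2⌉`. -/
theorem robustCliqueNum_le_robustChromNum_le_of_chordal
    {V : Type} [Fintype V] [DecidableEq V] (G : SimpleGraph V)
    (hchordal : IsChordalGraph G) :
    robustCliqueNum G ≤ robustChromNum G ∧
      robustChromNum G ≤ (chromNum G + 1) / 2 := by
  classical
  have hdiag : IsOneSelection G (fun v => s(v, v)) := fun v => by simp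
  constructor
  · have hne : {m : ℕ | ∃ f : V → Sym2 V,
        IsOneSelection G f ∧ chromNum (oneRemoved G f) = m}.Nonempty :=
      ⟨_, (fun v => s(v, v)), hdiag, rfl⟩
    obtain ⟨f₀, hf₀, hchrom⟩ := Nat.sInf_mem hne
    have h1 : robustCliqueNum G ≤ (oneRemoved G f₀).cliqueNum :=
      Nat.sInf_le ⟨f₀, hf₀, rfl⟩
    have h2 := aux_cliqueNum_le_chromNum (oneRemoved G f₀)
    calc robustCliqueNum G ≤ (oneRemoved G f₀).cliqueNum := h1
      _ ≤ chromNum (oneRemoved G f₀) := h2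
      _ = robustChromNum G := hchrom
  · set k := chromNum G with hk
    have hcol : G.Colorable k :=
      Nat.sInf_mem (s := {n | G.Colorable n}) ⟨Fintype.card V, G.colorable_of_fintype⟩
    obtain ⟨c⟩ := hcol
    set cc : V → ℕ := fun v => (c v : ℕ) with hcc
    set H : SimpleGraph V := ⟨fun a b => G.Adj a b ∧ cc a / 2 = cc b / 2,
      ⟨fun a b h => ⟨h.1.symm, h.2.symm⟩⟩, ⟨fun a h => G.loopless.irrefl a h.1⟩⟩ with hHdef
    have hle : ∀ ⦃a b⦄, H.Adj a b → G.Adj a b := fun a b h => h.1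
    have hhalf : ∀ ⦃a b⦄, H.Adj a b → cc a / 2 = cc b / 2 := fun a b h => h.2
    have hproper : ∀ ⦃a b⦄, G.Adj a b → cc a ≠ cc b := by
      intro a b h hcc'
      exact c.valid h (Fin.val_injective hcc')
    have hHc : ∀ ⦃a b⦄, G.Adj a b → cc a / 2 = cc b / 2 → H.Adj a b :=
      fun a b h1 h2 => ⟨h1, h2⟩
    have hac : H.IsAcyclic := aux_half_acyclic hle hhalf hproper hHc hchordal
    obtain ⟨f, hsel, hcover⟩ := aux_exists_selection hac
    have hcolor : (oneRemoved G f).Colorable ((k + 1) / 2) := by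
      refine ⟨SimpleGraph.Coloring.mk
        (fun v => ⟨cc v / 2, by have h1 : cc v < k := (c v).2; omega⟩) ?_⟩
      intro a b hab hfb
      simp only [oneRemoved, SimpleGraph.deleteEdges_adj] at hab
      have h2 : cc a / 2 = cc b / 2 := by
        have := congrArg Fin.val hfb
        simpa using this
      exact hab.2 (hcover (hHc hab.1 h2))
    have hstep : robustChromNum G ≤ chromNum (oneRemoved G f) :=
      Nat.sInf_le ⟨f, hsel, rfl⟩
    have hstep2 : chromNum (oneRemoved G f) ≤ (k + 1) / 2 := Nat.sInf_le hcolor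
    exact hstep.trans hstep2
end

section
/- For every integer k ≥ 2 there exists a finite interval graph G_k such that ω(G_k) = χ(G_k) = k and ω₁(G_k) = χ₁(G_k) = ⌈k/2⌉. -/
open SimpleGraph

namespace RobustHalf

/-- Vertex: a level `< L+1`, a branch word (padded with 0 from position `lvl` on),
and a side bit.  Level-`L` vertices ("leaves") exist only when `k = 2L+1` and have side `false`. -/
def Vt (k L : ℕ) :=
  {x : Fin (L+1) × (Fin L → Fin 3) × Bool //
    (∀ r : Fin L, (x.1 : ℕ) ≤ (r : ℕ) → x.2.1 r = 0) ∧
    ((x.1 : ℕ) = L → x.2.2 = false ∧ k = 2*L+1)}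

instance (k L : ℕ) : DecidableEq (Vt k L) := by unfold Vt; infer_instance
noncomputable instance (k L : ℕ) : Fintype (Vt k L) := by
  have : Finite (Vt k L) := by unfold Vt; infer_instance
  exact Fintype.ofFinite _

variable {k L : ℕ}

def lvl (x : Vt k L) : ℕ := (x.1.1 : ℕ)
def wrd (x : Vt k L) : Fin L → Fin 3 := x.1.2.1
def sde (x : Vt k L) : Bool := x.1.2.2

lemma lvl_le (x : Vt k L) : lvl x ≤ L := Nat.lt_succ_iff.mp x.1.1.isLt
lemma pad (x : Vt k L) : ∀ r : Fin L, lvl x ≤ (r : ℕ) → wrd x r = 0 := x.2.1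
lemma leafprop (x : Vt k L) : lvl x = L → sde x = false ∧ k = 2*L+1 := x.2.2

lemma Vt.ext {x y : Vt k L} (h1 : lvl x = lvl y) (h2 : wrd x = wrd y) (h3 : sde x = sde y) :
    x = y := by
  obtain ⟨⟨i, g, s⟩, hx⟩ := x
  obtain ⟨⟨j, h, t⟩, hy⟩ := y
  apply Subtype.ext
  simp only [lvl, wrd, sde] at h1 h2 h3
  simp_all [Fin.ext_iff]

def T (k L : ℕ) : SimpleGraph (Vt k L) where
  Adj x y := x ≠ y ∧ ∀ r : Fin L, (r : ℕ) < lvl x → (r : ℕ) < lvl y → wrd x r = wrd y r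
  symm := by
    constructor
    rintro x y ⟨h1, h2⟩
    exact ⟨h1.symm, fun r ha hb => (h2 r hb ha).symm⟩
  loopless := ⟨fun x h => h.1 rfl⟩

lemma word_eq_of_agree {x y : Vt k L} (hxy : lvl x = lvl y)
    (h : ∀ r : Fin L, (r : ℕ) < lvl x → (r : ℕ) < lvl y → wrd x r = wrd y r) :
    wrd x = wrd y := by
  funext r
  by_cases hr : (r : ℕ) < lvl x
  · exact h r hr (hxy ▸ hr)
  · rw [pad x r (le_of_not_gt hr), pad y r (hxy ▸ le_of_not_gt hr)]

lemma adj_same_level {x y : Vt k L} (h : (T k L).Adj x y) (hl : lvl x = lvl y) :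
    wrd x = wrd y ∧ sde x ≠ sde y := by
  have hw := word_eq_of_agree hl h.2
  refine ⟨hw, fun hs => h.1 (Vt.ext hl hw hs)⟩

/-- encoding used for colorings and clique bounds -/
def enc (x : Vt k L) : ℕ := 2 * lvl x + (if sde x then 1 else 0)

lemma enc_lt (hk2 : k = 2*L ∨ k = 2*L+1) (x : Vt k L) : enc x < k := by
  have h1 := lvl_le x
  have h2 := leafprop x
  unfold enc
  by_cases hL : lvl x = L
  · obtain ⟨hs, hk'⟩ := h2 hL
    rw [hL, hs]
    simp only [Bool.false_eq_true, if_false]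
    omega
  · have : lvl x < L := lt_of_le_of_ne h1 hL
    by_cases hs : sde x <;> simp [hs] <;> omega

lemma enc_inj {x y : Vt k L} (hadj : (T k L).Adj x y) (h : enc x = enc y) : False := by
  unfold enc at h
  cases hsx : sde x <;> cases hsy : sde y <;> rw [hsx, hsy] at h <;> simp at h
  · exact (adj_same_level hadj (by omega)).2 (hsx.trans hsy.symm)
  · omega
  · omega
  · exact (adj_same_level hadj (by omega)).2 (hsx.trans hsy.symm)


/-! ### the canonical chain clique -/

def chainV (hk2 : k = 2*L ∨ k = 2*L+1) (j : ℕ) (hj : j < k) : Vt k L :=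
  if h : j < 2*L then
    ⟨(⟨j/2, by omega⟩, 0, decide (j % 2 = 1)),
      fun r _ => rfl, fun hL' => absurd hL' (by simp; omega)⟩
  else
    ⟨(⟨L, by omega⟩, 0, false),
      fun r hr => rfl, fun _ => ⟨rfl, by omega⟩⟩

lemma enc_chainV (hk2 : k = 2*L ∨ k = 2*L+1) (j : ℕ) (hj : j < k) :
    enc (chainV hk2 j hj) = j := by
  unfold chainV enc lvl sde
  by_cases h : j < 2*L
  · erw [dif_pos h]
    by_cases h2 : j % 2 = 1 <;> simp [h2] <;> omega
  · erw [dif_neg h]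
    simp
    omega

lemma wrd_chainV (hk2 : k = 2*L ∨ k = 2*L+1) (j : ℕ) (hj : j < k) :
    wrd (chainV hk2 j hj) = 0 := by
  unfold chainV wrd
  by_cases h : j < 2*L
  · erw [dif_pos h]
  · erw [dif_neg h]

lemma chain_clique (hk2 : k = 2*L ∨ k = 2*L+1) :
    ∃ s : Finset (Vt k L), (T k L).IsNClique k s := by
  classical
  refine ⟨Finset.image (fun j : Fin k => chainV hk2 j j.2) Finset.univ, ?_, ?_⟩
  · rintro x hx y hy hxy
    simp only [Finset.coe_image, Set.mem_image] at hx hy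
    obtain ⟨j1, _, rfl⟩ := hx
    obtain ⟨j2, _, rfl⟩ := hy
    refine ⟨hxy, fun r _ _ => ?_⟩
    rw [wrd_chainV, wrd_chainV]
  · rw [Finset.card_image_of_injective _ ?_, Finset.card_univ, Fintype.card_fin]
    intro j1 j2 hj
    have := congrArg enc hj
    rw [enc_chainV, enc_chainV] at this
    exact Fin.ext this

/-! ### colorability and clique bounds for `T` -/

lemma colorable_T (hk2 : k = 2*L ∨ k = 2*L+1) : (T k L).Colorable k :=
  ⟨Coloring.mk (fun x => ⟨enc x, enc_lt hk2 x⟩)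
    (fun hadj h => enc_inj hadj (by simpa [Fin.ext_iff] using h))⟩

lemma card_le_of_subclique {G : SimpleGraph (Vt k L)} (hG : G ≤ T k L)
    (hk2 : k = 2*L ∨ k = 2*L+1) {s : Finset (Vt k L)} (hs : G.IsClique ↑s) :
    s.card ≤ k := by
  classical
  have : s.card ≤ (Finset.range k).card := by
    apply Finset.card_le_card_of_injOn (fun x => enc x)
    · intro x _
      simp [enc_lt hk2 x]
    · intro x hx y hy hxy
      by_contra hne
      exact enc_inj (hG (hs (by simpa using hx) (by simpa using hy) hne)) hxy
  simpa using this

lemma cliqueNum_le_of_subgraph {G : SimpleGraph (Vt k L)} (hG : G ≤ T k L)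
    (hk2 : k = 2*L ∨ k = 2*L+1) : G.cliqueNum ≤ k := by
  apply csSup_le
  · exact ⟨0, ∅, SimpleGraph.isNClique_empty.mpr rfl⟩
  · rintro n ⟨s, hs⟩
    rw [SimpleGraph.isNClique_iff] at hs
    rw [← hs.2]
    exact card_le_of_subclique hG hk2 hs.1

lemma cliqueNum_bddAbove (G : SimpleGraph (Vt k L)) :
    BddAbove {n | ∃ s, G.IsNClique n s} := by
  refine ⟨Fintype.card (Vt k L), ?_⟩
  rintro n ⟨s, hs⟩
  rw [SimpleGraph.isNClique_iff] at hs
  rw [← hs.2]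
  exact Finset.card_le_card (Finset.subset_univ s)

lemma cliqueNum_T (hk2 : k = 2*L ∨ k = 2*L+1) : (T k L).cliqueNum = k := by
  refine le_antisymm (cliqueNum_le_of_subgraph le_rfl hk2) ?_
  obtain ⟨s, hs⟩ := chain_clique hk2
  exact le_csSup (cliqueNum_bddAbove _) ⟨s, hs⟩

lemma le_of_colorable_of_clique {G : SimpleGraph (Vt k L)} {s : Finset (Vt k L)} {n c : ℕ}
    (hs : G.IsNClique n s) (hc : G.Colorable c) : n ≤ c := by
  by_contra h
  exact (hc.cliqueFree (by omega)) s hs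

lemma chromNum_T (hk2 : k = 2*L ∨ k = 2*L+1) : chromNum (T k L) = k := by
  obtain ⟨s, hs⟩ := chain_clique hk2
  have hmem : k ∈ {n : ℕ | (T k L).Colorable n} := colorable_T hk2
  refine le_antisymm (Nat.sInf_le hmem) (le_csInf ⟨k, hmem⟩ ?_)
  intro c hc
  exact le_of_colorable_of_clique hs hc


/-! ### the good selection `fstar` -/

def flipv (x : Vt k L) (h : lvl x < L) : Vt k L :=
  ⟨(x.1.1, wrd x, true), x.2.1, fun hL' => absurd hL' (Nat.ne_of_lt h)⟩

noncomputable def fstar : Vt k L → Sym2 (Vt k L) := fun x =>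
  if h : lvl x < L ∧ sde x = false then s(x, flipv x h.1) else s(x, x)

lemma fstar_sel : IsOneSelection (T k L) (fstar (k := k) (L := L)) := by
  intro v
  unfold fstar
  by_cases h : lvl v < L ∧ sde v = false
  · rw [dif_pos h]; simp
  · rw [dif_neg h]; simp

lemma colorable_fstar (hk2 : k = 2*L ∨ k = 2*L+1) :
    (oneRemoved (T k L) (fstar (k := k) (L := L))).Colorable ((k+1)/2) := by
  have hcol : ∀ x : Vt k L, lvl x < (k+1)/2 := by
    intro x
    have h1 := lvl_le x
    by_cases hL : lvl x = L
    · have := (leafprop x hL).2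
      omega
    · omega
  refine ⟨Coloring.mk (fun x => ⟨lvl x, hcol x⟩) ?_⟩
  intro x y hadj h
  rw [Fin.ext_iff] at h
  simp only at h
  -- same level; derive contradiction
  obtain ⟨hT, hnot⟩ : (T k L).Adj x y ∧ s(x,y) ∉ Set.range (fstar (k := k) (L := L)) := by
    have := hadj
    unfold oneRemoved at this
    rw [SimpleGraph.deleteEdges_adj] at this
    exact this
  obtain ⟨hw, hs⟩ := adj_same_level hT h
  have hlL : lvl x < L := by
    rcases Nat.lt_or_ge (lvl x) L with h' | h'
    · exact h'
    · exfalso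
      have hxL : lvl x = L := le_antisymm (lvl_le x) h'
      have h1 := (leafprop x hxL).1
      have h2 := (leafprop y (h ▸ hxL)).1
      exact hs (h1.trans h2.symm)
  apply hnot
  rcases Bool.eq_false_or_eq_true (sde x) with hx | hx
  · -- sde x = true, so y has side false; y selects the pair
    have hy : sde y = false := by
      rcases Bool.eq_false_or_eq_true (sde y) with h' | h'
      · exact absurd (hx.trans h'.symm) hs
      · exact h'
    refine ⟨y, ?_⟩
    unfold fstar
    have hlLy : lvl y < L := by omega
    rw [dif_pos ⟨hlLy, hy⟩]
    have hfl : flipv y hlLy = x :=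
      Vt.ext h.symm hw.symm ((rfl : sde (flipv y hlLy) = true).trans hx.symm)
    rw [hfl, Sym2.eq_swap]
  · -- sde x = false; x selects the pair
    have hy : sde y = true := by
      rcases Bool.eq_false_or_eq_true (sde y) with h' | h'
      · exact h'
      · exact absurd (hx.trans h'.symm) hs
    refine ⟨x, ?_⟩
    unfold fstar
    rw [dif_pos ⟨hlL, hx⟩]
    have hfl : flipv x hlL = y :=
      Vt.ext h hw ((rfl : sde (flipv x hlL) = true).trans hy.symm)
    rw [hfl]

/-! ### structure of one-removed graphs -/

section Lower

variable (f : Vt k L → Sym2 (Vt k L))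

def kills (x y : Vt k L) : Prop := f x = s(x, y)

lemma kills_unique {x y y' : Vt k L} (h1 : kills f x y) (h2 : kills f x y') : y = y' := by
  unfold kills at h1 h2
  rw [h1] at h2
  exact Sym2.congr_right.mp h2

lemma oneRemoved_adj (hf : IsOneSelection (T k L) f) {x y : Vt k L} :
    (oneRemoved (T k L) f).Adj x y ↔
      (T k L).Adj x y ∧ ¬ kills f x y ∧ ¬ kills f y x := by
  unfold oneRemoved
  rw [SimpleGraph.deleteEdges_adj]
  constructor
  · rintro ⟨hT, hnot⟩
    refine ⟨hT, fun h => hnot ⟨x, h⟩, fun h => hnot ⟨y, ?_⟩⟩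
    rw [h]
    exact Sym2.eq_swap.symm
  · rintro ⟨hT, h1, h2⟩
    refine ⟨hT, fun hr => ?_⟩
    obtain ⟨v, hv⟩ := hr
    have hv' : v ∈ s(x, y) := hv ▸ hf v
    rw [Sym2.mem_iff] at hv'
    rcases hv' with rfl | rfl
    · exact h1 hv
    · exact h2 (hv.trans Sym2.eq_swap)

def Cone (l : ℕ) (w : Fin L → Fin 3) (x : Vt k L) : Prop :=
  l ≤ lvl x ∧ ∀ r : Fin L, (r : ℕ) < l → wrd x r = w r

def Spent (l : ℕ) (w : Fin L → Fin 3) (x : Vt k L) : Prop :=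
  ∀ y, kills f x y → y = x ∨ ¬ Cone l w y

lemma target_digit (z : Vt k L) (lf : Fin L) :
    ∃ dz : Fin 3, ∀ y, kills f z y → y = z ∨ wrd y lf = dz := by
  by_cases h : ∃ y, kills f z y ∧ y ≠ z
  · obtain ⟨y0, hy0, hne⟩ := h
    refine ⟨wrd y0 lf, fun y hy => ?_⟩
    by_cases hyz : y = z
    · exact Or.inl hyz
    · exact Or.inr (by rw [kills_unique f hy hy0])
  · refine ⟨0, fun y hy => Or.inl ?_⟩
    by_contra hne
    exact h ⟨y, hy, hne⟩

lemma tree_lemma (hk2 : k = 2*L ∨ k = 2*L+1) (hf : IsOneSelection (T k L) f) :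
    ∀ (d l : ℕ), l + d = L → ∀ (w : Fin L → Fin 3) (A B : Set (Vt k L)),
      (∀ x ∈ A, Spent f l w x) → (∀ x ∈ B, Spent f l w x) →
      (∀ x, Cone l w x → x ∈ A → x ∈ B → False) →
      ∃ KA KB : Finset (Vt k L),
        (oneRemoved (T k L) f).IsClique ↑KA ∧ (oneRemoved (T k L) f).IsClique ↑KB ∧
        (∀ x ∈ KA, Cone l w x ∧ x ∉ A) ∧ (∀ x ∈ KB, Cone l w x ∧ x ∉ B) ∧
        k ≤ KA.card + KB.card + 2*l := by
  intro d
  induction d with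
  | zero =>
    intro l hdl w A B hA hB hAB
    have hlL : l = L := by omega
    rcases hk2 with hke | hko
    · refine ⟨∅, ∅, by simp [SimpleGraph.isClique_empty], by simp [SimpleGraph.isClique_empty],
        by simp, by simp, by simp; omega⟩
    · -- odd case: use the leaf below `w`
      have hpad : ∀ r : Fin L, ((⟨L, by omega⟩ : Fin (L+1)) : ℕ) ≤ (r : ℕ) →
          w r = 0 := fun r hr => absurd r.isLt (not_lt.mpr hr)
      set x0 : Vt k L := ⟨(⟨L, by omega⟩, w, false), hpad, fun _ => ⟨rfl, hko⟩⟩ with hx0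
      have hx0l : lvl x0 = L := rfl
      have hx0c : Cone l w x0 := ⟨by omega, fun r hr => rfl⟩
      by_cases hx : x0 ∈ A
      · refine ⟨∅, {x0}, by simp [SimpleGraph.isClique_empty],
          by rw [Finset.coe_singleton]; exact SimpleGraph.isClique_singleton _,
          by simp, ?_, ?_⟩
        · intro x hx'
          rw [Finset.mem_singleton] at hx'
          subst hx'
          exact ⟨hx0c, fun hB' => hAB x0 hx0c hx hB'⟩
        · rw [Finset.card_singleton, Finset.card_empty]
          omega
      · refine ⟨{x0}, ∅,
          by rw [Finset.coe_singleton]; exact SimpleGraph.isClique_singleton _,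
          by simp [SimpleGraph.isClique_empty], ?_, by simp, ?_⟩
        · intro x hx'
          rw [Finset.mem_singleton] at hx'
          subst hx'
          exact ⟨hx0c, hx⟩
        · rw [Finset.card_singleton, Finset.card_empty]
          omega
  | succ d ih =>
    intro l hdl w A B hA hB hAB
    have hlL : l < L := by omega
    set lf : Fin L := ⟨l, hlL⟩ with hlf
    -- the two block vertices at position `w`, level `l`
    set u : Vt k L :=
      ⟨(⟨l, by omega⟩, fun r => if (r : ℕ) < l then w r else 0, false),
        fun r hr => if_neg (not_lt.mpr hr), fun hL' => absurd hL' (Nat.ne_of_lt hlL)⟩ with hu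
    set wv : Vt k L :=
      ⟨(⟨l, by omega⟩, fun r => if (r : ℕ) < l then w r else 0, true),
        fun r hr => if_neg (not_lt.mpr hr), fun hL' => absurd hL' (Nat.ne_of_lt hlL)⟩ with hwv
    have hul : lvl u = l := rfl
    have hwl : lvl wv = l := rfl
    have huw : u ≠ wv := by
      intro h
      exact Bool.false_ne_true (congrArg sde h)
    have u_cone : Cone l w u := ⟨le_of_eq hul.symm, fun r hr => if_pos hr⟩
    have wv_cone : Cone l w wv := ⟨le_of_eq hwl.symm, fun r hr => if_pos hr⟩
    obtain ⟨du, hdu⟩ := target_digit f u lf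
    obtain ⟨dw, hdw⟩ := target_digit f wv lf
    obtain ⟨c, hcdu, hcdw⟩ : ∃ c : Fin 3, c ≠ du ∧ c ≠ dw :=
      (by decide : ∀ a b : Fin 3, ∃ c : Fin 3, c ≠ a ∧ c ≠ b) du dw
    set w' : Fin L → Fin 3 := Function.update w lf c with hw'
    have hlfval : (lf : ℕ) = l := rfl
    have hupd : ∀ r : Fin L, (r : ℕ) < l → w' r = w r := by
      intro r hr
      have hne : ¬ r = lf := fun h => by rw [h] at hr; simp [hlf] at hr
      rw [hw', Function.update_apply, if_neg hne]
    have hupd2 : w' lf = c := by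
      rw [hw', Function.update_self]
    have cone_mono : ∀ x : Vt k L, Cone (l+1) w' x → Cone l w x := by
      rintro x ⟨hx1, hx2⟩
      refine ⟨by omega, fun r hr => ?_⟩
      rw [hx2 r (by omega), hupd r hr]
    have cone_digit : ∀ x : Vt k L, Cone (l+1) w' x → wrd x lf = c := by
      rintro x ⟨hx1, hx2⟩
      rw [hx2 lf (by rw [hlfval]; omega), hupd2]
    have u_ncone : ¬ Cone (l+1) w' u := by
      rintro ⟨h1, -⟩
      rw [hul] at h1
      omega
    have wv_ncone : ¬ Cone (l+1) w' wv := by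
      rintro ⟨h1, -⟩
      rw [hwl] at h1
      omega
    have hcu : ∀ y : Vt k L, Cone (l+1) w' y → ¬ kills f u y := by
      intro y hy hk
      rcases hdu y hk with rfl | hd
      · exact u_ncone hy
      · exact hcdu ((cone_digit y hy).symm.trans hd)
    have hcw : ∀ y : Vt k L, Cone (l+1) w' y → ¬ kills f wv y := by
      intro y hy hk
      rcases hdw y hk with rfl | hd
      · exact wv_ncone hy
      · exact hcdw ((cone_digit y hy).symm.trans hd)
    have spent_mono : ∀ x : Vt k L, Spent f l w x → Spent f (l+1) w' x := by
      intro x hx y hk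
      exact (hx y hk).imp_right (fun h hc => h (cone_mono y hc))
    -- generic "one block vertex per side" case
    have pairCase : ∀ zA zB : Vt k L,
        ((zA = u ∧ zB = wv) ∨ (zA = wv ∧ zB = u)) → zA ∉ A → zB ∉ B →
        ∃ KA KB : Finset (Vt k L),
          (oneRemoved (T k L) f).IsClique ↑KA ∧ (oneRemoved (T k L) f).IsClique ↑KB ∧
          (∀ x ∈ KA, Cone l w x ∧ x ∉ A) ∧ (∀ x ∈ KB, Cone l w x ∧ x ∉ B) ∧
          k ≤ KA.card + KB.card + 2*l := by
      intro zA zB hzz hzA hzB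
      have hzAc : Cone l w zA := by rcases hzz with ⟨rfl, -⟩ | ⟨rfl, -⟩ <;> assumption
      have hzBc : Cone l w zB := by rcases hzz with ⟨-, rfl⟩ | ⟨-, rfl⟩ <;> assumption
      have hzAl : lvl zA = l := by rcases hzz with ⟨rfl, -⟩ | ⟨rfl, -⟩ <;> rfl
      have hzBl : lvl zB = l := by rcases hzz with ⟨-, rfl⟩ | ⟨-, rfl⟩ <;> rfl
      have hzAn : ¬ Cone (l+1) w' zA := by
        rcases hzz with ⟨rfl, -⟩ | ⟨rfl, -⟩ <;> assumption
      have hzBn : ¬ Cone (l+1) w' zB := by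
        rcases hzz with ⟨-, rfl⟩ | ⟨-, rfl⟩ <;> assumption
      have hzAkill : ∀ y : Vt k L, Cone (l+1) w' y → ¬ kills f zA y := by
        rcases hzz with ⟨rfl, -⟩ | ⟨rfl, -⟩
        · exact hcu
        · exact hcw
      have hzBkill : ∀ y : Vt k L, Cone (l+1) w' y → ¬ kills f zB y := by
        rcases hzz with ⟨-, rfl⟩ | ⟨-, rfl⟩
        · exact hcw
        · exact hcu
      have hzAB : zA ≠ zB := by
        rcases hzz with ⟨rfl, rfl⟩ | ⟨rfl, rfl⟩
        · exact huw
        · exact huw.symm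
      obtain ⟨KA', KB', hKAc, hKBc, hKAm, hKBm, hsum⟩ :=
        ih (l+1) (by omega) w'
          {x | Cone (l+1) w' x ∧ (x ∈ A ∨ kills f x zA)}
          {x | Cone (l+1) w' x ∧ (x ∈ B ∨ kills f x zB)}
          (by
            rintro x ⟨hxc, hx | hx⟩
            · exact spent_mono x (hA x hx)
            · intro y hk
              right
              intro hcy
              have : y = zA := kills_unique f hk hx
              exact hzAn (this ▸ hcy))
          (by
            rintro x ⟨hxc, hx | hx⟩
            · exact spent_mono x (hB x hx)
            · intro y hk
              right
              intro hcy
              have : y = zB := kills_unique f hk hx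
              exact hzBn (this ▸ hcy))
          (by
            rintro x hc ⟨-, hxa⟩ ⟨-, hxb⟩
            have hxl : l + 1 ≤ lvl x := hc.1
            rcases hxa with hxa | hxa <;> rcases hxb with hxb | hxb
            · exact hAB x (cone_mono x hc) hxa hxb
            · rcases hA x hxa zB hxb with heq | hnc
              · rw [heq] at hzBl; omega
              · exact hnc hzBc
            · rcases hB x hxb zA hxa with heq | hnc
              · rw [heq] at hzAl; omega
              · exact hnc hzAc
            · exact hzAB (kills_unique f hxa hxb))
      have hzAnotin : zA ∉ KA' := fun h => hzAn (hKAm zA h).1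
      have hzBnotin : zB ∉ KB' := fun h => hzBn (hKBm zB h).1
      refine ⟨insert zA KA', insert zB KB', ?_, ?_, ?_, ?_, ?_⟩
      · rw [Finset.coe_insert]
        refine hKAc.insert (fun b hb hneb => ?_)
        have hb' : b ∈ KA' := Finset.mem_coe.mp hb
        obtain ⟨hbc, hbA⟩ := hKAm b hb'
        rw [oneRemoved_adj f hf]
        refine ⟨⟨hneb, fun r hr1 hr2 => ?_⟩, hzAkill b hbc, fun hk => hbA ⟨hbc, Or.inr hk⟩⟩
        rw [hzAl] at hr1
        rw [hzAc.2 r hr1, (cone_mono b hbc).2 r hr1]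
      · rw [Finset.coe_insert]
        refine hKBc.insert (fun b hb hneb => ?_)
        have hb' : b ∈ KB' := Finset.mem_coe.mp hb
        obtain ⟨hbc, hbB⟩ := hKBm b hb'
        rw [oneRemoved_adj f hf]
        refine ⟨⟨hneb, fun r hr1 hr2 => ?_⟩, hzBkill b hbc, fun hk => hbB ⟨hbc, Or.inr hk⟩⟩
        rw [hzBl] at hr1
        rw [hzBc.2 r hr1, (cone_mono b hbc).2 r hr1]
      · intro x hx
        rcases Finset.mem_insert.mp hx with rfl | hx'
        · exact ⟨hzAc, hzA⟩
        · obtain ⟨hbc, hbA⟩ := hKAm x hx'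
          exact ⟨cone_mono x hbc, fun hxA => hbA ⟨hbc, Or.inl hxA⟩⟩
      · intro x hx
        rcases Finset.mem_insert.mp hx with rfl | hx'
        · exact ⟨hzBc, hzB⟩
        · obtain ⟨hbc, hbB⟩ := hKBm x hx'
          exact ⟨cone_mono x hbc, fun hxB => hbB ⟨hbc, Or.inl hxB⟩⟩
      · rw [Finset.card_insert_of_notMem hzAnotin, Finset.card_insert_of_notMem hzBnotin]
        omega
    -- the case where both block vertices lie on the same side
    have bothCase : ∀ (P Q : Set (Vt k L)),
        (∀ x ∈ P, Spent f l w x) → (∀ x ∈ Q, Spent f l w x) →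
        (∀ x, Cone l w x → x ∈ P → x ∈ Q → False) →
        u ∈ P → wv ∈ P →
        ∃ KA KB : Finset (Vt k L),
          (oneRemoved (T k L) f).IsClique ↑KA ∧ (oneRemoved (T k L) f).IsClique ↑KB ∧
          (∀ x ∈ KA, Cone l w x ∧ x ∉ P) ∧ (∀ x ∈ KB, Cone l w x ∧ x ∉ Q) ∧
          k ≤ KA.card + KB.card + 2*l := by
      intro P Q hP hQ hPQ huP hwP
      have huQ : u ∉ Q := fun h => hPQ u u_cone huP h
      have hwQ : wv ∉ Q := fun h => hPQ wv wv_cone hwP h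
      obtain ⟨KA', KB', hKAc, hKBc, hKAm, hKBm, hsum⟩ :=
        ih (l+1) (by omega) w'
          {x | Cone (l+1) w' x ∧ x ∈ P}
          {x | Cone (l+1) w' x ∧ (x ∈ Q ∨ kills f x u ∨ kills f x wv)}
          (by rintro x ⟨hxc, hx⟩; exact spent_mono x (hP x hx))
          (by
            rintro x ⟨hxc, hx | hx | hx⟩
            · exact spent_mono x (hQ x hx)
            · intro y hk
              right
              intro hcy
              have : y = u := kills_unique f hk hx
              exact u_ncone (this ▸ hcy)
            · intro y hk
              right
              intro hcy
              have : y = wv := kills_unique f hk hx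
              exact wv_ncone (this ▸ hcy))
          (by
            rintro x hc ⟨-, hxa⟩ ⟨-, hxb⟩
            have hxl : l + 1 ≤ lvl x := hc.1
            rcases hxb with hxb | hxb | hxb
            · exact hPQ x (cone_mono x hc) hxa hxb
            · rcases hP x hxa u hxb with heq | hnc
              · rw [heq] at hul; omega
              · exact hnc u_cone
            · rcases hP x hxa wv hxb with heq | hnc
              · rw [heq] at hwl; omega
              · exact hnc wv_cone)
      have hwnotin : wv ∉ KB' := fun h => wv_ncone (hKBm wv h).1
      have hunotin : u ∉ insert wv KB' := by
        rw [Finset.mem_insert]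
        rintro (h | h)
        · exact huw h
        · exact u_ncone (hKBm u h).1
      have hclique2 : (oneRemoved (T k L) f).IsClique ↑(insert wv KB') := by
        rw [Finset.coe_insert]
        refine hKBc.insert (fun b hb hneb => ?_)
        have hb' : b ∈ KB' := Finset.mem_coe.mp hb
        obtain ⟨hbc, hbB⟩ := hKBm b hb'
        rw [oneRemoved_adj f hf]
        refine ⟨⟨hneb, fun r hr1 hr2 => ?_⟩, hcw b hbc,
          fun hk => hbB ⟨hbc, Or.inr (Or.inr hk)⟩⟩
        rw [hwl] at hr1
        rw [wv_cone.2 r hr1, (cone_mono b hbc).2 r hr1]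
      refine ⟨KA', insert u (insert wv KB'), hKAc, ?_, ?_, ?_, ?_⟩
      · rw [Finset.coe_insert]
        refine hclique2.insert (fun b hb hneb => ?_)
        rw [Finset.coe_insert, Set.mem_insert_iff] at hb
        rcases hb with rfl | hb
        · -- b = wv
          rw [oneRemoved_adj f hf]
          refine ⟨⟨huw, fun r hr1 hr2 => rfl⟩, ?_, ?_⟩
          · intro hk
            rcases hP u huP wv hk with heq | hnc
            · exact huw heq.symm
            · exact hnc wv_cone
          · intro hk
            rcases hP wv hwP u hk with heq | hnc
            · exact huw heq
            · exact hnc u_cone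
        · have hb' : b ∈ KB' := Finset.mem_coe.mp hb
          obtain ⟨hbc, hbB⟩ := hKBm b hb'
          rw [oneRemoved_adj f hf]
          refine ⟨⟨hneb, fun r hr1 hr2 => ?_⟩, hcu b hbc,
            fun hk => hbB ⟨hbc, Or.inr (Or.inl hk)⟩⟩
          rw [hul] at hr1
          rw [u_cone.2 r hr1, (cone_mono b hbc).2 r hr1]
      · intro x hx
        obtain ⟨hbc, hbP⟩ := hKAm x hx
        exact ⟨cone_mono x hbc, fun hxP => hbP ⟨hbc, hxP⟩⟩
      · intro x hx
        rcases Finset.mem_insert.mp hx with rfl | hx'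
        · exact ⟨u_cone, huQ⟩
        · rcases Finset.mem_insert.mp hx' with rfl | hx''
          · exact ⟨wv_cone, hwQ⟩
          · obtain ⟨hbc, hbB⟩ := hKBm x hx''
            exact ⟨cone_mono x hbc, fun hxQ => hbB ⟨hbc, Or.inl hxQ⟩⟩
      · rw [Finset.card_insert_of_notMem hunotin, Finset.card_insert_of_notMem hwnotin]
        omega
    by_cases huA : u ∈ A
    · by_cases hwA : wv ∈ A
      · exact bothCase A B hA hB hAB huA hwA
      · exact pairCase wv u (Or.inr ⟨rfl, rfl⟩) hwA (fun h => hAB u u_cone huA h)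
    · by_cases hwB : wv ∈ B
      · by_cases huB : u ∈ B
        · obtain ⟨KA, KB, h1, h2, h3, h4, h5⟩ :=
            bothCase B A hB hA (fun x hc hx1 hx2 => hAB x hc hx2 hx1) huB hwB
          exact ⟨KB, KA, h2, h1, h4, h3, by omega⟩
        · exact pairCase wv u (Or.inr ⟨rfl, rfl⟩) (fun h => hAB wv wv_cone h hwB) huB
      · exact pairCase u wv (Or.inl ⟨rfl, rfl⟩) huA hwB

lemma exists_big_clique (hk2 : k = 2*L ∨ k = 2*L+1) (hf : IsOneSelection (T k L) f) :
    ∃ K : Finset (Vt k L), (oneRemoved (T k L) f).IsClique ↑K ∧ (k+1)/2 ≤ K.card := by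
  obtain ⟨KA, KB, h1, h2, -, -, h5⟩ :=
    tree_lemma f hk2 hf L 0 (by omega) 0 ∅ ∅ (by simp) (by simp) (by simp)
  rcases le_total KA.card KB.card with h | h
  · exact ⟨KB, h2, by omega⟩
  · exact ⟨KA, h1, by omega⟩

lemma cliqueNum_oneRemoved_ge (hk2 : k = 2*L ∨ k = 2*L+1) (hf : IsOneSelection (T k L) f) :
    (k+1)/2 ≤ (oneRemoved (T k L) f).cliqueNum := by
  obtain ⟨K, hK, hcard⟩ := exists_big_clique f hk2 hf
  have : K.card ≤ (oneRemoved (T k L) f).cliqueNum :=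
    le_csSup (cliqueNum_bddAbove _) ⟨K, hK, rfl⟩
  omega

lemma chromNum_oneRemoved_ge (hk2 : k = 2*L ∨ k = 2*L+1) (hf : IsOneSelection (T k L) f) :
    (k+1)/2 ≤ chromNum (oneRemoved (T k L) f) := by
  obtain ⟨K, hK, hcard⟩ := exists_big_clique f hk2 hf
  have hne : {n : ℕ | (oneRemoved (T k L) f).Colorable n}.Nonempty :=
    ⟨Fintype.card (Vt k L), (oneRemoved (T k L) f).colorable_of_fintype⟩
  apply le_csInf hne
  intro c hc
  have := le_of_colorable_of_clique (G := oneRemoved (T k L) f) ⟨hK, rfl⟩ hc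
  omega

end Lower

lemma cliqueNum_le_of_colorable {G : SimpleGraph (Vt k L)} {c : ℕ} (hc : G.Colorable c) :
    G.cliqueNum ≤ c := by
  apply csSup_le
  · exact ⟨0, ∅, SimpleGraph.isNClique_empty.mpr rfl⟩
  · rintro n ⟨s, hs⟩
    exact le_of_colorable_of_clique hs hc

lemma chromNum_fstar (hk2 : k = 2*L ∨ k = 2*L+1) :
    chromNum (oneRemoved (T k L) (fstar (k := k) (L := L))) = (k+1)/2 := by
  refine le_antisymm (Nat.sInf_le (colorable_fstar hk2)) ?_
  exact chromNum_oneRemoved_ge _ hk2 fstar_sel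

lemma cliqueNum_fstar (hk2 : k = 2*L ∨ k = 2*L+1) :
    (oneRemoved (T k L) (fstar (k := k) (L := L))).cliqueNum = (k+1)/2 := by
  refine le_antisymm (cliqueNum_le_of_colorable (colorable_fstar hk2)) ?_
  exact cliqueNum_oneRemoved_ge _ hk2 fstar_sel

lemma robustCliqueNum_T (hk2 : k = 2*L ∨ k = 2*L+1) :
    robustCliqueNum (T k L) = (k+1)/2 := by
  have hmem : (k+1)/2 ∈ {m : ℕ | ∃ f, IsOneSelection (T k L) f ∧
      (oneRemoved (T k L) f).cliqueNum = m} :=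
    ⟨fstar, fstar_sel, cliqueNum_fstar hk2⟩
  refine le_antisymm (Nat.sInf_le hmem) (le_csInf ⟨_, hmem⟩ ?_)
  rintro m ⟨f, hf, rfl⟩
  exact cliqueNum_oneRemoved_ge f hk2 hf

lemma robustChromNum_T (hk2 : k = 2*L ∨ k = 2*L+1) :
    robustChromNum (T k L) = (k+1)/2 := by
  have hmem : (k+1)/2 ∈ {m : ℕ | ∃ f, IsOneSelection (T k L) f ∧
      chromNum (oneRemoved (T k L) f) = m} :=
    ⟨fstar, fstar_sel, chromNum_fstar hk2⟩
  refine le_antisymm (Nat.sInf_le hmem) (le_csInf ⟨_, hmem⟩ ?_)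
  rintro m ⟨f, hf, rfl⟩
  exact chromNum_oneRemoved_ge f hk2 hf


/-! ### interval representation -/

section Interval

def dig (x : Vt k L) (r : ℕ) : ℕ := if h : r < L then (wrd x ⟨r, h⟩ : ℕ) else 0

lemma dig_le (x : Vt k L) (r : ℕ) : dig x r ≤ 2 := by
  unfold dig
  by_cases h : r < L
  · rw [dif_pos h]
    have := (wrd x ⟨r, h⟩).isLt
    omega
  · rw [dif_neg h]
    omega

def Pos (x : Vt k L) : ℕ := ∑ r ∈ Finset.range (lvl x), dig x r * 3^(L-1-r)

lemma tail_bound (d : ℕ → ℕ) (hd : ∀ r, d r ≤ 2) (a : ℕ) :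
    ∀ b, a ≤ b → b ≤ L →
      (∑ r ∈ Finset.Ico a b, d r * 3^(L-1-r)) + 3^(L-b) ≤ 3^(L-a) := by
  intro b
  induction b with
  | zero =>
    intro h1 h2
    have ha : a = 0 := by omega
    subst ha
    simp
  | succ b ihb =>
    intro h1 h2
    by_cases hab : a = b+1
    · subst hab
      simp
    · have h1' : a ≤ b := by omega
      rw [Finset.sum_Ico_succ_top h1']
      have hih := ihb h1' (by omega)
      have hpow : 3^(L-b) = 3 * 3^(L-(b+1)) := by
        rw [← pow_succ']
        congr 1
        omega
      have hLb : L-1-b = L-(b+1) := by omega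
      rw [hLb]
      have key : d b * 3^(L-(b+1)) + 3^(L-(b+1)) ≤ 3^(L-b) := by
        have h3 : (d b + 1) * 3^(L-(b+1)) ≤ 3 * 3^(L-(b+1)) :=
          Nat.mul_le_mul_right _ (by have := hd b; omega)
        rw [add_one_mul] at h3
        rw [hpow]
        exact h3
      omega

lemma pos_nested {x y : Vt k L} (hxy : lvl x ≤ lvl y)
    (hagree : ∀ r, r < lvl x → dig x r = dig y r) :
    Pos x ≤ Pos y ∧ Pos y + 3^(L - lvl y) ≤ Pos x + 3^(L - lvl x) := by
  have hsplit : Pos y = Pos x + ∑ r ∈ Finset.Ico (lvl x) (lvl y), dig y r * 3^(L-1-r) := by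
    have h1 : ∑ r ∈ Finset.Ico 0 (lvl x), dig y r * 3^(L-1-r)
        + ∑ r ∈ Finset.Ico (lvl x) (lvl y), dig y r * 3^(L-1-r)
        = ∑ r ∈ Finset.Ico 0 (lvl y), dig y r * 3^(L-1-r) :=
      Finset.sum_Ico_consecutive _ (Nat.zero_le _) hxy
    have h2 : Pos x = ∑ r ∈ Finset.Ico 0 (lvl x), dig y r * 3^(L-1-r) := by
      unfold Pos
      rw [Finset.range_eq_Ico]
      exact Finset.sum_congr rfl
        (fun r hr => by rw [hagree r (Finset.mem_Ico.mp hr).2])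
    unfold Pos
    rw [Finset.range_eq_Ico, ← h1]
    congr 1
    exact Finset.sum_congr (by rw [Finset.range_eq_Ico])
      (fun r hr => by rw [(hagree r (Finset.mem_range.mp hr)).symm])
  constructor
  · rw [hsplit]
    exact Nat.le_add_right _ _
  · rw [hsplit]
    have := tail_bound (dig y) (dig_le y) (lvl x) (lvl y) hxy (lvl_le y)
    omega

lemma pos_sep {x y : Vt k L} {r0 : ℕ} (hrx : r0 < lvl x) (hry : r0 < lvl y)
    (hagree : ∀ r, r < r0 → dig x r = dig y r) (hlt : dig x r0 < dig y r0) :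
    Pos x + 3^(L - lvl x) ≤ Pos y := by
  have hsx : Pos x = (∑ r ∈ Finset.range r0, dig x r * 3^(L-1-r)) + dig x r0 * 3^(L-1-r0)
      + ∑ r ∈ Finset.Ico (r0+1) (lvl x), dig x r * 3^(L-1-r) := by
    unfold Pos
    rw [Finset.range_eq_Ico,
      ← Finset.sum_Ico_consecutive _ (show 0 ≤ r0+1 by omega) (show r0+1 ≤ lvl x by omega)]
    have e1 : ∑ r ∈ Finset.Ico 0 (r0+1), dig x r * 3^(L-1-r)
        = ∑ r ∈ Finset.range (r0+1), dig x r * 3^(L-1-r) := by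
      rw [← Finset.range_eq_Ico]
    rw [e1, Finset.sum_range_succ, Finset.range_eq_Ico]
  have hty : (∑ r ∈ Finset.range r0, dig y r * 3^(L-1-r)) + dig y r0 * 3^(L-1-r0) ≤ Pos y := by
    have hsub : ∑ r ∈ Finset.range (r0+1), dig y r * 3^(L-1-r) ≤ Pos y := by
      unfold Pos
      apply Finset.sum_le_sum_of_subset
      intro t ht
      rw [Finset.mem_range] at *
      omega
    rwa [Finset.sum_range_succ] at hsub
  have htail := tail_bound (dig x) (dig_le x) (r0+1) (lvl x) (by omega) (lvl_le x)
  have hagree' : ∑ r ∈ Finset.range r0, dig x r * 3^(L-1-r)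
      = ∑ r ∈ Finset.range r0, dig y r * 3^(L-1-r) :=
    Finset.sum_congr rfl (fun r hr => by rw [hagree r (Finset.mem_range.mp hr)])
  have hstep : dig x r0 * 3^(L-1-r0) + 3^(L-1-r0) ≤ dig y r0 * 3^(L-1-r0) := by
    have h3 : (dig x r0 + 1) * 3^(L-1-r0) ≤ dig y r0 * 3^(L-1-r0) :=
      Nat.mul_le_mul_right _ (by omega)
    rwa [add_one_mul] at h3
  have hexp : L - (r0+1) = L-1-r0 := by omega
  rw [hexp] at htail
  omega

noncomputable def av (x : Vt k L) : ℝ := (Pos x : ℝ)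
noncomputable def bv (x : Vt k L) : ℝ := (Pos x : ℝ) + ((3^(L - lvl x) : ℕ) : ℝ) - 1/2

lemma av_le_bv (x : Vt k L) : av x ≤ bv x := by
  unfold av bv
  have h1 : (1 : ℕ) ≤ 3^(L - lvl x) := Nat.one_le_pow _ _ (by norm_num)
  have : (1:ℝ) ≤ ((3^(L - lvl x) : ℕ) : ℝ) := by exact_mod_cast h1
  linarith

lemma dig_agree_of_adj {u v : Vt k L} (hadj : (T k L).Adj u v) :
    ∀ r, r < lvl u → r < lvl v → dig u r = dig v r := by
  intro r hr1 hr2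
  have hrL : r < L := lt_of_lt_of_le hr1 (lvl_le u)
  unfold dig
  rw [dif_pos hrL, dif_pos hrL]
  rw [hadj.2 ⟨r, hrL⟩ hr1 hr2]

lemma nested_nonempty {u v : Vt k L} (hadj : (T k L).Adj u v) (hle : lvl u ≤ lvl v) :
    (Set.Icc (av u) (bv u) ∩ Set.Icc (av v) (bv v)).Nonempty := by
  have hagree : ∀ r, r < lvl u → dig u r = dig v r := by
    intro r hr
    exact dig_agree_of_adj hadj r hr (by omega)
  obtain ⟨h1, h2⟩ := pos_nested hle hagree
  refine ⟨av v, ⟨⟨?_, ?_⟩, ⟨le_refl _, av_le_bv v⟩⟩⟩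
  · unfold av
    exact_mod_cast h1
  · unfold av bv
    have h3 : (1 : ℕ) ≤ 3^(L - lvl v) := Nat.one_le_pow _ _ (by norm_num)
    have hcast : ((Pos v : ℕ) : ℝ) + ((3^(L - lvl v) : ℕ) : ℝ)
        ≤ ((Pos u : ℕ) : ℝ) + ((3^(L - lvl u) : ℕ) : ℝ) := by exact_mod_cast h2
    have hcast2 : (1:ℝ) ≤ ((3^(L - lvl v) : ℕ) : ℝ) := by exact_mod_cast h3
    linarith

lemma sep_empty {u v : Vt k L} {r0 : ℕ} (hrx : r0 < lvl u) (hry : r0 < lvl v)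
    (hagree : ∀ r, r < r0 → dig u r = dig v r) (hlt : dig u r0 < dig v r0) :
    Set.Icc (av u) (bv u) ∩ Set.Icc (av v) (bv v) = ∅ := by
  have hsep := pos_sep hrx hry hagree hlt
  rw [Set.eq_empty_iff_forall_notMem]
  rintro t ⟨⟨-, h2⟩, ⟨h3, -⟩⟩
  unfold av bv at *
  have hcast : ((Pos u : ℕ) : ℝ) + ((3^(L - lvl u) : ℕ) : ℝ) ≤ ((Pos v : ℕ) : ℝ) := by
    exact_mod_cast hsep
  linarith

lemma interval_T : IsIntervalGraph (T k L) := by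
  classical
  refine ⟨av, bv, av_le_bv, ?_⟩
  intro u v huv
  constructor
  · intro hadj
    rcases le_total (lvl u) (lvl v) with hle | hle
    · exact nested_nonempty hadj hle
    · rw [Set.inter_comm]
      exact nested_nonempty hadj.symm hle
  · intro hne
    by_contra hnadj
    have hnag : ¬ ∀ r : Fin L, (r : ℕ) < lvl u → (r : ℕ) < lvl v → wrd u r = wrd v r := by
      intro hag
      exact hnadj ⟨huv, hag⟩
    have hQ : ∃ r : ℕ, r < lvl u ∧ r < lvl v ∧ dig u r ≠ dig v r := by
      push_neg at hnag
      obtain ⟨r, hr1, hr2, hr3⟩ := hnag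
      refine ⟨(r : ℕ), hr1, hr2, ?_⟩
      unfold dig
      rw [dif_pos r.isLt, dif_pos r.isLt]
      simp only [Fin.eta]
      exact fun h => hr3 (Fin.ext h)
    obtain ⟨hq1, hq2, hq3⟩ := Nat.find_spec hQ
    have hmin : ∀ r, r < Nat.find hQ → dig u r = dig v r := by
      intro r hr
      by_contra hne'
      exact (Nat.find_min hQ hr) ⟨by omega, by omega, hne'⟩
    rcases Nat.lt_or_ge (dig u (Nat.find hQ)) (dig v (Nat.find hQ)) with hlt | hge
    · have hemp := sep_empty hq1 hq2 hmin hlt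
      rw [hemp] at hne
      exact Set.not_nonempty_empty hne
    · have hlt' : dig v (Nat.find hQ) < dig u (Nat.find hQ) := by omega
      have hemp := sep_empty hq2 hq1 (fun r hr => (hmin r hr).symm) hlt'
      rw [Set.inter_comm, hemp] at hne
      exact Set.not_nonempty_empty hne

end Interval

/-! ### transport to `Fin n` -/

section Transport

noncomputable def eqv (k L : ℕ) : Vt k L ≃ Fin (Fintype.card (Vt k L)) := Fintype.equivFin _

noncomputable def Gfin (k L : ℕ) : SimpleGraph (Fin (Fintype.card (Vt k L))) :=
  (T k L).comap ((eqv k L).symm : Fin (Fintype.card (Vt k L)) → Vt k L)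

lemma colorable_comap_iff (H : SimpleGraph (Vt k L)) (c : ℕ) :
    (H.comap ((eqv k L).symm : Fin (Fintype.card (Vt k L)) → Vt k L)).Colorable c ↔
      H.Colorable c := by
  constructor
  · rintro ⟨C⟩
    refine ⟨Coloring.mk (fun v => C ((eqv k L) v)) ?_⟩
    intro x y h
    apply C.valid
    show H.Adj ((eqv k L).symm ((eqv k L) x)) ((eqv k L).symm ((eqv k L) y))
    rw [Equiv.symm_apply_apply, Equiv.symm_apply_apply]
    exact h
  · rintro ⟨C⟩
    refine ⟨Coloring.mk (fun a => C ((eqv k L).symm a)) ?_⟩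
    intro x y h
    exact C.valid h

lemma chromNum_comap (H : SimpleGraph (Vt k L)) :
    chromNum (H.comap ((eqv k L).symm : Fin (Fintype.card (Vt k L)) → Vt k L)) =
      chromNum H := by
  unfold chromNum
  congr 1
  ext c
  exact colorable_comap_iff H c

lemma cliqueNum_comap (H : SimpleGraph (Vt k L)) :
    (H.comap ((eqv k L).symm : Fin (Fintype.card (Vt k L)) → Vt k L)).cliqueNum =
      H.cliqueNum := by
  unfold SimpleGraph.cliqueNum
  congr 1
  ext n
  constructor
  · rintro ⟨s, hs⟩
    rw [SimpleGraph.isNClique_iff] at hs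
    obtain ⟨hcl, hcard⟩ := hs
    refine ⟨s.map (eqv k L).symm.toEmbedding,
      (SimpleGraph.isNClique_iff _).mpr ⟨?_, by rw [Finset.card_map, hcard]⟩⟩
    intro x hx y hy hxy
    rw [Finset.coe_map] at hx hy
    obtain ⟨a, ha, rfl⟩ := hx
    obtain ⟨b, hb, rfl⟩ := hy
    have hne : a ≠ b := fun h => hxy (congrArg _ h)
    exact hcl ha hb hne
  · rintro ⟨s, hs⟩
    rw [SimpleGraph.isNClique_iff] at hs
    obtain ⟨hcl, hcard⟩ := hs
    refine ⟨s.map (eqv k L).toEmbedding,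
      (SimpleGraph.isNClique_iff _).mpr ⟨?_, by rw [Finset.card_map, hcard]⟩⟩
    intro x hx y hy hxy
    rw [Finset.coe_map] at hx hy
    obtain ⟨a, ha, rfl⟩ := hx
    obtain ⟨b, hb, rfl⟩ := hy
    have hne : a ≠ b := fun h => hxy (congrArg _ h)
    have : H.Adj a b := hcl ha hb hne
    show H.Adj ((eqv k L).symm ((eqv k L) a)) ((eqv k L).symm ((eqv k L) b))
    rw [Equiv.symm_apply_apply, Equiv.symm_apply_apply]
    exact this

lemma oneRemoved_comap (f : Fin (Fintype.card (Vt k L)) → Sym2 (Fin (Fintype.card (Vt k L)))) :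
    oneRemoved (Gfin k L) f =
      (oneRemoved (T k L) (fun v => (f ((eqv k L) v)).map (eqv k L).symm)).comap
        ((eqv k L).symm : Fin (Fintype.card (Vt k L)) → Vt k L) := by
  ext a b
  unfold oneRemoved Gfin
  rw [SimpleGraph.comap_adj, SimpleGraph.deleteEdges_adj, SimpleGraph.deleteEdges_adj,
    SimpleGraph.comap_adj]
  apply and_congr Iff.rfl
  apply not_congr
  constructor
  · rintro ⟨v, hv⟩
    refine ⟨(eqv k L).symm v, ?_⟩
    show (f ((eqv k L) ((eqv k L).symm v))).map (eqv k L).symm = _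
    rw [Equiv.apply_symm_apply, hv, Sym2.map_pair_eq]
  · rintro ⟨v, hv⟩
    refine ⟨(eqv k L) v, ?_⟩
    have := congrArg (Sym2.map (eqv k L)) hv
    simp only [Sym2.map_map, Sym2.map_pair_eq, Equiv.apply_symm_apply] at this
    rw [Equiv.self_comp_symm, Sym2.map_id] at this
    exact this

lemma sel_transfer (f : Fin (Fintype.card (Vt k L)) → Sym2 (Fin (Fintype.card (Vt k L))))
    (hf : IsOneSelection (Gfin k L) f) :
    IsOneSelection (T k L) (fun v => (f ((eqv k L) v)).map (eqv k L).symm) := by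
  intro v
  rw [Sym2.mem_map]
  exact ⟨(eqv k L) v, hf ((eqv k L) v), Equiv.symm_apply_apply _ _⟩

lemma roundtrip (g : Vt k L → Sym2 (Vt k L)) :
    (fun v => (((fun a => (g ((eqv k L).symm a)).map (eqv k L)) ((eqv k L) v)).map
      (eqv k L).symm)) = g := by
  funext v
  show ((g ((eqv k L).symm ((eqv k L) v))).map (eqv k L)).map (eqv k L).symm = g v
  rw [Equiv.symm_apply_apply, Sym2.map_map, Equiv.symm_comp_self, Sym2.map_id]
  rfl

lemma robustChromNum_Gfin (k L : ℕ) :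
    robustChromNum (Gfin k L) = robustChromNum (T k L) := by
  unfold robustChromNum
  congr 1
  ext m
  constructor
  · rintro ⟨f, hf, rfl⟩
    refine ⟨_, sel_transfer f hf, ?_⟩
    rw [oneRemoved_comap f, chromNum_comap]
  · rintro ⟨g, hg, rfl⟩
    refine ⟨fun a => (g ((eqv k L).symm a)).map (eqv k L), ?_, ?_⟩
    · intro a
      rw [Sym2.mem_map]
      exact ⟨(eqv k L).symm a, hg ((eqv k L).symm a), Equiv.apply_symm_apply _ _⟩
    · rw [oneRemoved_comap, chromNum_comap, roundtrip]

lemma robustCliqueNum_Gfin (k L : ℕ) :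
    robustCliqueNum (Gfin k L) = robustCliqueNum (T k L) := by
  unfold robustCliqueNum
  congr 1
  ext m
  constructor
  · rintro ⟨f, hf, rfl⟩
    refine ⟨_, sel_transfer f hf, ?_⟩
    rw [oneRemoved_comap f, cliqueNum_comap]
  · rintro ⟨g, hg, rfl⟩
    refine ⟨fun a => (g ((eqv k L).symm a)).map (eqv k L), ?_, ?_⟩
    · intro a
      rw [Sym2.mem_map]
      exact ⟨(eqv k L).symm a, hg ((eqv k L).symm a), Equiv.apply_symm_apply _ _⟩
    · rw [oneRemoved_comap, cliqueNum_comap, roundtrip]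

lemma interval_Gfin (k L : ℕ) (h : IsIntervalGraph (T k L)) : IsIntervalGraph (Gfin k L) := by
  obtain ⟨a, b, hab, hadj⟩ := h
  refine ⟨a ∘ (eqv k L).symm, b ∘ (eqv k L).symm, fun v => hab _, fun u v huv => ?_⟩
  exact hadj _ _ (fun h => huv (by
    have := congrArg (eqv k L) h
    rwa [Equiv.apply_symm_apply, Equiv.apply_symm_apply] at this))

end Transport

lemma main (k : ℕ) (hk : 2 ≤ k) :
    ∃ (n : ℕ) (G : SimpleGraph (Fin n)),
      IsIntervalGraph G ∧ G.cliqueNum = k ∧ chromNum G = k ∧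
        robustCliqueNum G = (k + 1) / 2 ∧ robustChromNum G = (k + 1) / 2 := by
  have hk2 : k = 2*(k/2) ∨ k = 2*(k/2)+1 := by omega
  refine ⟨Fintype.card (Vt k (k/2)), Gfin k (k/2), ?_, ?_, ?_, ?_, ?_⟩
  · exact interval_Gfin k (k/2) interval_T
  · show ((T k (k/2)).comap _).cliqueNum = k
    rw [cliqueNum_comap, cliqueNum_T hk2]
  · show chromNum ((T k (k/2)).comap _) = k
    rw [chromNum_comap, chromNum_T hk2]
  · rw [robustCliqueNum_Gfin, robustCliqueNum_T hk2]
  · rw [robustChromNum_Gfin, robustChromNum_T hk2]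

end RobustHalf

/-- For every `k ≥ 2` there is a finite interval graph `G` with
`ω(G) = χ(G) = k` and `ω₁(G) = χ₁(G) = ⌈k/2⌉`. -/
theorem exists_intervalGraph_robust_half (k : ℕ) (hk : 2 ≤ k) :
    ∃ (n : ℕ) (G : SimpleGraph (Fin n)),
      IsIntervalGraph G ∧ G.cliqueNum = k ∧ chromNum G = k ∧
        robustCliqueNum G = (k + 1) / 2 ∧ robustChromNum G = (k + 1) / 2 := by
  exact RobustHalf.main k hk
end
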